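/- arXiv:2511.17382 — 4 statements merged into one kernel-verified Lean document; each statement's English description precedes it below -/
import Mathlib

section
/- For a Schwartz function f : ℝ³ → ℝ, the homogeneous Sobolev norm of order -3/2 is finite, i.e. ∫_{ℝ³} |k|^{-3} |f̂(k)|² dk < ∞, if and only if f has vanishing spatial average, ∫_{ℝ³} f(x) dx = 0. -/
open MeasureTheory Real

noncomputable section

/-- Fourier transform on `ℝ³` with the paper's convention
`f̂(k) = ∫ f(x) exp(i k·x) dx`. -/
def ft (f : EuclideanSpace ℝ (Fin 3) → ℂ) (k : EuclideanSpace ℝ (Fin 3)) : ℂ :=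
  ∫ x, f x * Complex.exp (Complex.I * ((inner ℝ k x : ℝ) : ℂ))

end

noncomputable section Aux

open Metric FourierTransform SchwartzMap Set RealInnerProductSpace ENNReal NNReal

local notation "E3" => EuclideanSpace ℝ (Fin 3)

/-- complexification of a real Schwartz function -/
def toC (f : SchwartzMap E3 ℝ) : SchwartzMap E3 ℂ where
  toFun x := (f x : ℂ)
  smooth' := Complex.ofRealCLM.contDiff.comp f.smooth'
  decay' := by
    intro k n
    obtain ⟨C, h⟩ := f.decay' k n
    refine ⟨C, fun x => ?_⟩
    have h1 : (fun x : E3 => ((f x : ℝ) : ℂ)) = (Complex.ofRealLI ∘ ⇑f) := rfl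
    rw [h1, Complex.ofRealLI.norm_iteratedFDeriv_comp_left (f.smooth ⊤).contDiffAt (mod_cast le_top)]
    exact h x

lemma toC_apply (f : SchwartzMap E3 ℝ) (x : E3) : toC f x = (f x : ℂ) := rfl

lemma ft_eq (g : E3 → ℂ) (k : E3) :
    ft g k = 𝓕 g ((-(2 * π)⁻¹) • k) := by
  rw [Real.fourier_eq']
  unfold ft
  congr 1
  ext v
  rw [smul_eq_mul, mul_comm (g v)]
  have h2 : (inner ℝ v ((-(2 * π)⁻¹ : ℝ) • k) : ℝ) = -(2 * π)⁻¹ * (inner ℝ v k : ℝ) :=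
    real_inner_smul_right _ _ _
  have h3 : (-2 * π * (inner ℝ v ((-(2 * π)⁻¹ : ℝ) • k) : ℝ)) = (inner ℝ k v : ℝ) := by
    rw [h2, real_inner_comm v k]
    have hπ : (π : ℝ) ≠ 0 := pi_ne_zero
    field_simp
  rw [h3]
  ring

lemma rpow_neg_nat' (t : ℝ) (ht : 0 ≤ t) (n : ℕ) : t ^ (-(n:ℝ)) = (t ^ n)⁻¹ := by
  rw [Real.rpow_neg ht, Real.rpow_natCast]

lemma pow_helper (n : ℕ) : ((2⁻¹:ℝ)^(n+1))⁻¹ * ((2⁻¹:ℝ)^n)^3 = 2 * (4⁻¹:ℝ)^n := by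
  induction n with
  | zero => norm_num
  | succ m ih => linear_combination (1/4:ℝ) * ih

lemma annuli_disjoint {r : ℕ → ℝ} (hr : ∀ n, r (n + 1) ≤ r n) :
    Pairwise (Function.onFun Disjoint
      (fun n => Metric.ball (0 : E3) (r n) \ Metric.ball 0 (r (n + 1)))) := by
  have hmono : Antitone r := antitone_nat_of_succ_le hr
  have key : ∀ m n, m < n →
      Disjoint (Metric.ball (0 : E3) (r m) \ Metric.ball 0 (r (m + 1)))
        (Metric.ball (0 : E3) (r n) \ Metric.ball 0 (r (n + 1))) := by
    intro m n h
    rw [Set.disjoint_left]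
    rintro x ⟨_, hx2⟩ ⟨hx3, _⟩
    exact hx2 (Metric.ball_subset_ball (hmono h) hx3)
  intro m n hmn
  rcases hmn.lt_or_gt with h | h
  · exact key m n h
  · exact (key n m h).symm

lemma fin_lemma :
    ∫⁻ k in Metric.ball (0 : E3) 1, ENNReal.ofReal (‖k‖ ^ (-1 : ℝ)) < ⊤ := by
  set μ : Measure E3 := volume
  set V : ℝ≥0∞ := μ (Metric.ball 0 1) with hV
  have hVt : V ≠ ⊤ := measure_ball_lt_top.ne
  set s : ℕ → ℝ := fun n => (2⁻¹ : ℝ) ^ n with hs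
  have hs_pos : ∀ n, 0 < s n := fun n => by positivity
  have hs_succ : ∀ n, s (n + 1) ≤ s n := fun n => by
    simp only [hs, pow_succ]
    nlinarith [pow_pos (by norm_num : (0:ℝ) < 2⁻¹) n]
  set A : ℕ → Set E3 := fun n => Metric.ball (0 : E3) (s n) \ Metric.ball 0 (s (n + 1)) with hA
  have hAm : ∀ n, MeasurableSet (A n) := fun n =>
    measurableSet_ball.diff measurableSet_ball
  have hball : ∀ r : ℝ, 0 ≤ r → μ (Metric.ball 0 r) = ENNReal.ofReal (r ^ 3) * V := by
    intro r hrr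
    rw [hV, Measure.addHaar_ball μ _ hrr, finrank_euclideanSpace_fin]
  -- coverage
  have cover : Metric.ball (0 : E3) 1 ⊆ (⋃ n, A n) ∪ {0} := by
    intro x hx
    rcases eq_or_ne x 0 with h | h
    · exact Or.inr h
    · left
      have ht0 : 0 < ‖x‖ := norm_pos_iff.mpr h
      have ht1 : ‖x‖ < 1 := mem_ball_zero_iff.mp hx
      have hex : ∃ m, (2⁻¹ : ℝ) ^ (m + 1) ≤ ‖x‖ := by
        obtain ⟨m, hm⟩ := exists_pow_lt_of_lt_one ht0 (by norm_num : (2⁻¹ : ℝ) < 1)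
        exact ⟨m, by
          calc (2⁻¹ : ℝ) ^ (m + 1) ≤ 2⁻¹ ^ m := by
                have : (0:ℝ) < 2⁻¹ ^ m := by positivity
                rw [pow_succ]; nlinarith
            _ ≤ ‖x‖ := hm.le⟩
      have hn1 : (2⁻¹ : ℝ) ^ (Nat.find hex + 1) ≤ ‖x‖ := Nat.find_spec hex
      have hn2 : ‖x‖ < (2⁻¹ : ℝ) ^ (Nat.find hex) := by
        rcases Nat.eq_zero_or_pos (Nat.find hex) with h0 | hpos
        · rw [h0, pow_zero]; exact ht1
        · have hlt : Nat.find hex - 1 < Nat.find hex := Nat.sub_lt hpos one_pos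
          have := Nat.find_min hex hlt
          rw [Nat.sub_add_cancel hpos] at this
          exact lt_of_not_ge this
      refine Set.mem_iUnion.mpr ⟨Nat.find hex, ?_, ?_⟩
      · exact mem_ball_zero_iff.mpr hn2
      · intro hc
        exact absurd (mem_ball_zero_iff.mp hc) (not_lt.mpr hn1)
  calc ∫⁻ k in Metric.ball (0 : E3) 1, ENNReal.ofReal (‖k‖ ^ (-1 : ℝ)) ∂μ
      ≤ ∫⁻ k in (⋃ n, A n) ∪ {0}, ENNReal.ofReal (‖k‖ ^ (-1 : ℝ)) ∂μ :=
        lintegral_mono_set cover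
    _ ≤ (∫⁻ k in ⋃ n, A n, ENNReal.ofReal (‖k‖ ^ (-1 : ℝ)) ∂μ)
        + ∫⁻ k in ({0} : Set E3), ENNReal.ofReal (‖k‖ ^ (-1 : ℝ)) ∂μ :=
        lintegral_union_le _ _ _
    _ = ∑' n, ∫⁻ k in A n, ENNReal.ofReal (‖k‖ ^ (-1 : ℝ)) ∂μ := by
        rw [setLIntegral_measure_zero _ _ (measure_singleton 0), add_zero,
          lintegral_iUnion hAm (annuli_disjoint hs_succ)]
    _ ≤ ∑' n, ENNReal.ofReal (2 * (4⁻¹ : ℝ) ^ n) * V := by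
        refine ENNReal.tsum_le_tsum fun n => ?_
        have step1 : ∫⁻ k in A n, ENNReal.ofReal (‖k‖ ^ (-1 : ℝ)) ∂μ
            ≤ ∫⁻ _ in A n, ENNReal.ofReal ((s (n+1))⁻¹) ∂μ := by
          refine setLIntegral_mono measurable_const fun x hx => ?_
          have hxl : s (n + 1) ≤ ‖x‖ := by
            have := hx.2
            rw [mem_ball_zero_iff] at this
            exact not_lt.mp this
          refine ENNReal.ofReal_le_ofReal ?_
          rw [Real.rpow_neg_one]
          exact inv_anti₀ (hs_pos (n+1)) hxl
        refine step1.trans ?_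
        rw [setLIntegral_const]
        have hμA : μ (A n) ≤ ENNReal.ofReal ((s n) ^ 3) * V := by
          calc μ (A n) ≤ μ (Metric.ball 0 (s n)) := measure_mono Set.diff_subset
            _ = ENNReal.ofReal ((s n) ^ 3) * V := hball _ (hs_pos n).le
        calc ENNReal.ofReal ((s (n+1))⁻¹) * μ (A n)
            ≤ ENNReal.ofReal ((s (n+1))⁻¹) * (ENNReal.ofReal ((s n) ^ 3) * V) := by gcongr
          _ = ENNReal.ofReal ((s (n+1))⁻¹ * (s n) ^ 3) * V := by
              rw [ENNReal.ofReal_mul (by positivity), mul_assoc]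
          _ = ENNReal.ofReal (2 * (4⁻¹ : ℝ) ^ n) * V := by
              congr 1
              have ha : (0:ℝ) < (2⁻¹:ℝ) ^ n := by positivity
              have : (s (n+1))⁻¹ * (s n) ^ 3 = 2 * (4⁻¹ : ℝ) ^ n := by
                simp only [hs]; exact pow_helper n
              rw [this]
    _ < ⊤ := by
        rw [ENNReal.tsum_mul_right]
        refine ENNReal.mul_lt_top ?_ hVt.lt_top
        have hsum : Summable (fun n : ℕ => 2 * (4⁻¹ : ℝ) ^ n) :=
          (summable_geometric_of_lt_one (by norm_num) (by norm_num)).mul_left 2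
        rw [← ENNReal.ofReal_tsum_of_nonneg (fun n => by positivity) hsum]
        exact ENNReal.ofReal_lt_top

lemma inf_lemma (c ε : ℝ) (hc : 0 < c) (hε : 0 < ε) :
    ∫⁻ k in Metric.ball (0 : E3) ε, ENNReal.ofReal (c * ‖k‖ ^ (-3 : ℝ)) = ⊤ := by
  set μ : Measure E3 := volume
  set V : ℝ≥0∞ := μ (Metric.ball 0 1) with hV
  have hV0 : V ≠ 0 := (measure_ball_pos μ 0 one_pos).ne'
  have hVt : V ≠ ⊤ := measure_ball_lt_top.ne
  set r : ℕ → ℝ := fun n => ε * (2⁻¹:ℝ) ^ n with hr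
  have hr_pos : ∀ n, 0 < r n := fun n => by simp only [hr]; positivity
  have hr_half : ∀ n, r (n+1) = r n * 2⁻¹ := fun n => by simp only [hr, pow_succ]; ring
  have hr_succ : ∀ n, r (n+1) ≤ r n := fun n => by
    rw [hr_half n]; nlinarith [hr_pos n]
  set A : ℕ → Set E3 := fun n => Metric.ball (0:E3) (r n) \ Metric.ball 0 (r (n+1)) with hA
  have hAm : ∀ n, MeasurableSet (A n) := fun n => measurableSet_ball.diff measurableSet_ball
  have hball : ∀ t : ℝ, 0 ≤ t → μ (Metric.ball 0 t) = ENNReal.ofReal (t ^ 3) * V := by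
    intro t ht
    rw [hV, Measure.addHaar_ball μ _ ht, finrank_euclideanSpace_fin]
  have hsub : (⋃ n, A n) ⊆ Metric.ball (0:E3) ε := by
    refine iUnion_subset fun n => ?_
    refine diff_subset.trans (ball_subset_ball ?_)
    calc r n ≤ r 0 := antitone_nat_of_succ_le hr_succ (Nat.zero_le n)
      _ = ε := by simp [hr]
  have hmeas_int : Measurable fun k : E3 => ENNReal.ofReal (c * ‖k‖ ^ (-3:ℝ)) :=
    (measurable_const.mul (measurable_norm.pow_const _)).ennreal_ofReal
  have hAn_vol : ∀ n, μ (A n)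
      = (ENNReal.ofReal ((r n)^3) - ENNReal.ofReal ((r (n+1))^3)) * V := by
    intro n
    rw [hA]
    rw [measure_diff (ball_subset_ball (hr_succ n)) measurableSet_ball.nullMeasurableSet
          measure_ball_lt_top.ne, hball _ (hr_pos n).le, hball _ (hr_pos (n+1)).le,
        ENNReal.sub_mul (fun _ _ => hVt)]
  have hterm : ∀ n, ENNReal.ofReal (c * (7/8)) * V
      ≤ ∫⁻ k in A n, ENNReal.ofReal (c * ‖k‖ ^ (-3:ℝ)) ∂μ := by
    intro n
    have step : ∫⁻ _ in A n, ENNReal.ofReal (c * (r n) ^ (-3:ℝ)) ∂μ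
        ≤ ∫⁻ k in A n, ENNReal.ofReal (c * ‖k‖ ^ (-3:ℝ)) ∂μ := by
      refine setLIntegral_mono hmeas_int fun x hx => ?_
      have hx1 : ‖x‖ < r n := mem_ball_zero_iff.mp hx.1
      have hx2 : r (n+1) ≤ ‖x‖ := not_lt.mp (fun hcon => hx.2 (mem_ball_zero_iff.mpr hcon))
      have hx0 : 0 < ‖x‖ := lt_of_lt_of_le (hr_pos (n+1)) hx2
      refine ENNReal.ofReal_le_ofReal ?_
      have e1 : ‖x‖ ^ (-3:ℝ) = (‖x‖ ^ (3:ℕ))⁻¹ := by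
        rw [show (-3:ℝ) = -((3:ℕ):ℝ) by norm_num]; exact rpow_neg_nat' _ (norm_nonneg x) 3
      have e2 : (r n) ^ (-3:ℝ) = ((r n) ^ (3:ℕ))⁻¹ := by
        rw [show (-3:ℝ) = -((3:ℕ):ℝ) by norm_num]; exact rpow_neg_nat' _ (hr_pos n).le 3
      rw [e1, e2]
      have hle : ‖x‖ ^ (3:ℕ) ≤ (r n) ^ (3:ℕ) := pow_le_pow_left₀ (norm_nonneg x) hx1.le 3
      have hx3 : (0:ℝ) < ‖x‖ ^ (3:ℕ) := by positivity
      exact mul_le_mul_of_nonneg_left (inv_anti₀ hx3 hle) hc.le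
    refine le_trans ?_ step
    rw [setLIntegral_const, hAn_vol n, hr_half n]
    have hnn : (0:ℝ) ≤ (r n * 2⁻¹)^3 := by positivity
    rw [← ENNReal.ofReal_sub _ hnn, ← mul_assoc, ← ENNReal.ofReal_mul (by positivity)]
    have heq : c * (r n) ^ (-3:ℝ) * ((r n)^3 - (r n * 2⁻¹)^3) = c * (7/8) := by
      have e2 : (r n) ^ (-3:ℝ) = ((r n) ^ (3:ℕ))⁻¹ := by
        rw [show (-3:ℝ) = -((3:ℕ):ℝ) by norm_num]; exact rpow_neg_nat' _ (hr_pos n).le 3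
      rw [e2]
      have h0 : (r n) ≠ 0 := (hr_pos n).ne'
      field_simp
      ring
    rw [heq]
  have hne : ENNReal.ofReal (c * (7/8)) * V ≠ 0 :=
    mul_ne_zero (ENNReal.ofReal_pos.mpr (by nlinarith)).ne' hV0
  refine top_le_iff.mp ?_
  calc (⊤:ℝ≥0∞) = ∑' _ : ℕ, ENNReal.ofReal (c * (7/8)) * V :=
        (ENNReal.tsum_const_eq_top_of_ne_zero hne).symm
    _ ≤ ∑' n, ∫⁻ k in A n, ENNReal.ofReal (c * ‖k‖ ^ (-3:ℝ)) ∂μ := ENNReal.tsum_le_tsum hterm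
    _ = ∫⁻ k in ⋃ n, A n, ENNReal.ofReal (c * ‖k‖ ^ (-3:ℝ)) ∂μ :=
        (lintegral_iUnion hAm (annuli_disjoint hr_succ) _).symm
    _ ≤ ∫⁻ k in Metric.ball (0:E3) ε, ENNReal.ofReal (c * ‖k‖ ^ (-3:ℝ)) ∂μ :=
        lintegral_mono_set hsub

lemma norm_exp_I_mul_sub_one_le (θ : ℝ) : ‖Complex.exp (Complex.I * θ) - 1‖ ≤ 2 * |θ| := by
  rcases le_or_gt |θ| 1 with hθ | hθ
  · have h1 : ‖Complex.I * θ‖ ≤ 1 := by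
      rw [norm_mul, Complex.norm_I, one_mul, Complex.norm_real, Real.norm_eq_abs]; exact hθ
    have h2 := Complex.norm_exp_sub_one_le h1
    calc ‖Complex.exp (Complex.I * θ) - 1‖
        ≤ 2 * ‖Complex.I * θ‖ := h2
      _ = 2 * |θ| := by rw [norm_mul, Complex.norm_I, one_mul, Complex.norm_real, Real.norm_eq_abs]
  · have hnorm : ‖Complex.exp (Complex.I * θ)‖ = 1 := by
      exact Complex.norm_exp_I_mul_ofReal θ
    calc ‖Complex.exp (Complex.I * θ) - 1‖
        ≤ ‖Complex.exp (Complex.I * θ)‖ + ‖(1:ℂ)‖ := norm_sub_le _ _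
      _ = 2 := by rw [hnorm, norm_one]; norm_num
      _ ≤ 2 * |θ| := by nlinarith

set_option maxHeartbeats 1000000 in
/-- A real Schwartz function on `ℝ³` has finite homogeneous Sobolev norm of order `-3/2`,
i.e. `∫ |k|⁻³ |f̂(k)|² dk < ∞`, if and only if it has vanishing spatial average. -/
theorem stmt2 (f : SchwartzMap (EuclideanSpace ℝ (Fin 3)) ℝ) :
    (∫⁻ k : EuclideanSpace ℝ (Fin 3),
        ENNReal.ofReal (‖k‖ ^ (-3 : ℝ) * ‖ft (fun x => (f x : ℂ)) k‖ ^ 2) < ⊤) ↔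
      (∫ x, f x) = 0 := by
  classical
  set h : E3 → ℂ := ft (fun x => ((f x : ℝ) : ℂ)) with hh
  set G : SchwartzMap E3 ℂ := SchwartzMap.fourierTransformCLM ℂ (toC f) with hG
  have hft : ∀ k : E3, h k = G ((-(2 * π)⁻¹ : ℝ) • k) := by
    intro k
    rw [hh]
    exact ft_eq _ k
  have hcont : Continuous h := by
    have he : h = fun k => G ((-(2 * π)⁻¹ : ℝ) • k) := funext hft
    rw [he]
    exact G.continuous.comp (continuous_const_smul _)
  have hmeas : Measurable fun k : E3 => ENNReal.ofReal (‖k‖ ^ (-3:ℝ) * ‖h k‖ ^ 2) :=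
    ((measurable_norm.pow_const _).mul
      ((hcont.measurable.norm).pow_const 2)).ennreal_ofReal
  have hint : ∀ k : E3, Integrable
      (fun x => ((f x : ℝ):ℂ) * Complex.exp (Complex.I * ((inner ℝ k x : ℝ):ℂ))) volume := by
    intro k
    refine Integrable.mono' f.integrable.norm ?_ ?_
    · refine Continuous.aestronglyMeasurable ?_
      exact (Complex.continuous_ofReal.comp f.continuous).mul
        (Complex.continuous_exp.comp (continuous_const.mul
          (Complex.continuous_ofReal.comp (Continuous.inner continuous_const continuous_id))))
    · refine Filter.Eventually.of_forall fun x => ?_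
      rw [norm_mul]
      have he1 : ‖Complex.exp (Complex.I * ((inner ℝ k x : ℝ):ℂ))‖ = 1 := by
        exact Complex.norm_exp_I_mul_ofReal _
      rw [he1, mul_one, Complex.norm_real]
  have hfc_int : Integrable (fun x : E3 => ((f x : ℝ):ℂ)) volume := by
    have h1 := hint 0
    simpa using h1
  have h0' : h 0 = ∫ x : E3, ((f x : ℝ):ℂ) := by
    rw [hh]
    show (∫ x : E3, ((f x : ℝ):ℂ) * Complex.exp (Complex.I * ((inner ℝ (0:E3) x : ℝ):ℂ))) = _
    refine integral_congr_ae (Filter.Eventually.of_forall fun x => ?_)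
    simp
  have h0 : h 0 = ((∫ x, f x : ℝ) : ℂ) := by rw [h0']; exact integral_ofReal
  set I1 : ℝ := ∫ x : E3, ‖x‖ ^ (1:ℕ) * ‖f x‖ with hI1
  have hI1nn : 0 ≤ I1 := integral_nonneg fun x => by positivity
  have hlip : ∀ k : E3, ‖h k - h 0‖ ≤ 2 * I1 * ‖k‖ := by
    intro k
    have hdiff : h k - h 0 = ∫ x : E3, (((f x : ℝ):ℂ)
        * Complex.exp (Complex.I * ((inner ℝ k x : ℝ):ℂ)) - ((f x : ℝ):ℂ)) := by
      rw [integral_sub (hint k) hfc_int, h0']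
      rfl
    calc ‖h k - h 0‖
        ≤ ∫ x : E3, ‖((f x : ℝ):ℂ)
            * Complex.exp (Complex.I * ((inner ℝ k x : ℝ):ℂ)) - ((f x : ℝ):ℂ)‖ := by
          rw [hdiff]; exact norm_integral_le_integral_norm _
      _ ≤ ∫ x : E3, (2 * ‖k‖) * (‖x‖ ^ (1:ℕ) * ‖f x‖) := by
          refine integral_mono ((hint k).sub hfc_int).norm
            ((f.integrable_pow_mul volume 1).const_mul _) fun x => ?_
          have factor : ((f x : ℝ):ℂ) * Complex.exp (Complex.I * ((inner ℝ k x : ℝ):ℂ))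
              - ((f x : ℝ):ℂ)
              = ((f x : ℝ):ℂ) * (Complex.exp (Complex.I * ((inner ℝ k x : ℝ):ℂ)) - 1) := by
            ring
          show ‖_‖ ≤ _
          rw [factor, norm_mul, Complex.norm_real]
          have h1 := norm_exp_I_mul_sub_one_le ((inner ℝ k x : ℝ))
          have h2 : |(inner ℝ k x : ℝ)| ≤ ‖k‖ * ‖x‖ := abs_real_inner_le_norm k x
          have h3 : ‖Complex.exp (Complex.I * ((inner ℝ k x : ℝ):ℂ)) - 1‖ ≤ 2 * (‖k‖ * ‖x‖) := by
            refine h1.trans ?_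
            nlinarith
          calc ‖f x‖ * ‖Complex.exp (Complex.I * ((inner ℝ k x : ℝ):ℂ)) - 1‖
              ≤ ‖f x‖ * (2 * (‖k‖ * ‖x‖)) :=
                mul_le_mul_of_nonneg_left h3 (norm_nonneg _)
            _ = 2 * ‖k‖ * (‖x‖ ^ (1:ℕ) * ‖f x‖) := by rw [pow_one]; ring
      _ = 2 * I1 * ‖k‖ := by
          rw [integral_const_mul]
          rw [← hI1]
          ring
  obtain ⟨C₂, hC₂pos, hC₂⟩ := G.decay 2 0
  set D : ℝ := (2*π)^2 * C₂ with hD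
  have hDpos : 0 < D := by rw [hD]; positivity
  have hdecay : ∀ k : E3, ‖k‖^2 * ‖h k‖ ≤ D := by
    intro k
    have h2 := hC₂ ((-(2 * π)⁻¹ : ℝ) • k)
    rw [norm_iteratedFDeriv_zero] at h2
    rw [hft k]
    have hn : ‖((-(2 * π)⁻¹ : ℝ)) • k‖ = (2*π)⁻¹ * ‖k‖ := by
      rw [norm_smul, Real.norm_eq_abs, abs_neg, abs_of_pos (by positivity)]
    rw [hn, mul_pow, inv_pow] at h2
    have hp : (0:ℝ) < (2*π)^2 := by positivity
    calc ‖k‖^2 * ‖G ((-(2 * π)⁻¹ : ℝ) • k)‖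
        = (2*π)^2 * (((2*π)^2)⁻¹ * ‖k‖^2 * ‖G ((-(2 * π)⁻¹ : ℝ) • k)‖) := by
          field_simp
      _ ≤ (2*π)^2 * C₂ := mul_le_mul_of_nonneg_left h2 hp.le
  constructor
  · intro hfin
    by_contra hne
    have hc0 : h 0 ≠ 0 := by
      rw [h0]
      exact_mod_cast Complex.ofReal_ne_zero.mpr hne
    have hpos : 0 < ‖h 0‖ := norm_pos_iff.mpr hc0
    obtain ⟨ε, hε, hballe⟩ := Metric.continuousAt_iff.mp hcont.continuousAt (‖h 0‖/2)
      (by positivity)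
    have hlow : ∀ k ∈ Metric.ball (0:E3) ε, ‖h 0‖/2 ≤ ‖h k‖ := by
      intro k hk
      have hd := hballe (show dist k 0 < ε from mem_ball.mp hk)
      rw [dist_eq_norm] at hd
      have habs := abs_norm_sub_norm_le (h k) (h 0)
      have := abs_le.mp (habs.trans hd.le)
      linarith [this.1]
    have key : (∫⁻ k : E3, ENNReal.ofReal (‖k‖ ^ (-3:ℝ) * ‖h k‖^2)) = ⊤ := by
      refine top_le_iff.mp ?_
      calc (⊤:ℝ≥0∞)
          = ∫⁻ k in Metric.ball (0:E3) ε, ENNReal.ofReal ((‖h 0‖/2)^2 * ‖k‖ ^ (-3:ℝ)) :=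
            (inf_lemma _ _ (by positivity) hε).symm
        _ ≤ ∫⁻ k in Metric.ball (0:E3) ε, ENNReal.ofReal (‖k‖ ^ (-3:ℝ) * ‖h k‖^2) := by
            refine setLIntegral_mono hmeas fun k hk => ?_
            refine ENNReal.ofReal_le_ofReal ?_
            have h1 : ‖h 0‖/2 ≤ ‖h k‖ := hlow k hk
            have h2 : (0:ℝ) ≤ ‖k‖ ^ (-3:ℝ) := Real.rpow_nonneg (norm_nonneg _) _
            have h3 : (‖h 0‖/2)^2 ≤ ‖h k‖^2 := by nlinarith
            calc (‖h 0‖/2)^2 * ‖k‖ ^ (-3:ℝ) ≤ ‖h k‖^2 * ‖k‖ ^ (-3:ℝ) :=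
                  mul_le_mul_of_nonneg_right h3 h2
              _ = ‖k‖ ^ (-3:ℝ) * ‖h k‖^2 := by ring
        _ ≤ ∫⁻ k : E3, ENNReal.ofReal (‖k‖ ^ (-3:ℝ) * ‖h k‖^2) :=
            setLIntegral_le_lintegral _ _
    exact absurd key hfin.ne
  · intro hzero
    have h00 : h 0 = 0 := by rw [h0, hzero]; simp
    have hlip' : ∀ k : E3, ‖h k‖ ≤ 2*I1*‖k‖ := fun k => by
      have h1 := hlip k
      rwa [h00, sub_zero] at h1
    rw [← lintegral_add_compl (fun k : E3 => ENNReal.ofReal (‖k‖ ^ (-3:ℝ) * ‖h k‖^2))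
      (measurableSet_ball : MeasurableSet (Metric.ball (0:E3) 1))]
    refine ENNReal.add_lt_top.mpr ⟨?_, ?_⟩
    · calc ∫⁻ k in Metric.ball (0:E3) 1, ENNReal.ofReal (‖k‖ ^ (-3:ℝ) * ‖h k‖^2)
          ≤ ∫⁻ k in Metric.ball (0:E3) 1,
              ENNReal.ofReal ((2*I1)^2) * ENNReal.ofReal (‖k‖ ^ (-1:ℝ)) := by
            refine setLIntegral_mono
              (measurable_const.mul (measurable_norm.pow_const _).ennreal_ofReal)
              fun k _ => ?_
            rw [← ENNReal.ofReal_mul (by positivity)]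
            refine ENNReal.ofReal_le_ofReal ?_
            rcases eq_or_ne k 0 with rfl | hk0
            · rw [norm_zero, Real.zero_rpow (by norm_num), Real.zero_rpow (by norm_num)]
              simp
            · have hk0' : 0 < ‖k‖ := norm_pos_iff.mpr hk0
              have e3 : ‖k‖ ^ (-3:ℝ) = (‖k‖^(3:ℕ))⁻¹ := by
                rw [show (-3:ℝ) = -((3:ℕ):ℝ) by norm_num]
                exact rpow_neg_nat' _ (norm_nonneg k) 3
              have e1 : ‖k‖ ^ (-1:ℝ) = ‖k‖⁻¹ := Real.rpow_neg_one _
              have hhk : ‖h k‖^2 ≤ (2*I1*‖k‖)^2 := by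
                nlinarith [hlip' k, norm_nonneg (h k)]
              rw [e3, e1]
              have heq2 : (‖k‖^(3:ℕ))⁻¹ * (2*I1*‖k‖)^2 = (2*I1)^2 * ‖k‖⁻¹ := by
                field_simp
              calc (‖k‖^(3:ℕ))⁻¹ * ‖h k‖^2 ≤ (‖k‖^(3:ℕ))⁻¹ * (2*I1*‖k‖)^2 :=
                    mul_le_mul_of_nonneg_left hhk (by positivity)
                _ = (2*I1)^2 * ‖k‖⁻¹ := heq2
        _ = ENNReal.ofReal ((2*I1)^2)
            * ∫⁻ k in Metric.ball (0:E3) 1, ENNReal.ofReal (‖k‖ ^ (-1:ℝ)) :=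
            lintegral_const_mul' _ _ ENNReal.ofReal_ne_top
        _ < ⊤ := ENNReal.mul_lt_top ENNReal.ofReal_lt_top fin_lemma
    · calc ∫⁻ k in (Metric.ball (0:E3) 1)ᶜ, ENNReal.ofReal (‖k‖ ^ (-3:ℝ) * ‖h k‖^2)
          ≤ ∫⁻ k in (Metric.ball (0:E3) 1)ᶜ,
              ENNReal.ofReal (16*D^2) * ENNReal.ofReal ((1+‖k‖) ^ (-4:ℝ)) := by
            refine setLIntegral_mono
              (measurable_const.mul
                (((measurable_const.add measurable_norm).pow_const _).ennreal_ofReal))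
              fun k hk => ?_
            rw [← ENNReal.ofReal_mul (by positivity)]
            refine ENNReal.ofReal_le_ofReal ?_
            have hk1 : 1 ≤ ‖k‖ :=
              not_lt.mp (fun hcon => hk (mem_ball_zero_iff.mpr hcon))
            have hk0 : (0:ℝ) < ‖k‖ := lt_of_lt_of_le one_pos hk1
            have hhk : ‖h k‖ ≤ D / ‖k‖^2 := by
              rw [le_div_iff₀ (by positivity)]
              calc ‖h k‖ * ‖k‖^2 = ‖k‖^2 * ‖h k‖ := by ring
                _ ≤ D := hdecay k
            have e3 : ‖k‖ ^ (-3:ℝ) = (‖k‖^(3:ℕ))⁻¹ := by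
              rw [show (-3:ℝ) = -((3:ℕ):ℝ) by norm_num]
              exact rpow_neg_nat' _ (norm_nonneg k) 3
            have e4 : (1+‖k‖) ^ (-4:ℝ) = ((1+‖k‖)^(4:ℕ))⁻¹ := by
              rw [show (-4:ℝ) = -((4:ℕ):ℝ) by norm_num]
              exact rpow_neg_nat' _ (by positivity) 4
            rw [e3, e4]
            have hh2 : ‖h k‖^2 ≤ (D/‖k‖^2)^2 :=
              pow_le_pow_left₀ (norm_nonneg _) hhk 2
            calc (‖k‖^(3:ℕ))⁻¹ * ‖h k‖^2
                ≤ (‖k‖^(3:ℕ))⁻¹ * (D/‖k‖^2)^2 :=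
                  mul_le_mul_of_nonneg_left hh2 (by positivity)
              _ ≤ 16*D^2 * ((1+‖k‖)^(4:ℕ))⁻¹ := by
                  have expand : (‖k‖^(3:ℕ))⁻¹ * (D/‖k‖^2)^2 = D^2 / (‖k‖^7) := by
                    field_simp
                  have expand2 : 16*D^2 * ((1+‖k‖)^(4:ℕ))⁻¹ = 16*D^2/(1+‖k‖)^4 :=
                    (div_eq_mul_inv _ _).symm
                  rw [expand, expand2, div_le_div_iff₀ (by positivity) (by positivity)]
                  have hb : (1+‖k‖) ≤ 2*‖k‖ := by linarith
                  have hb4 : (1+‖k‖)^4 ≤ (2*‖k‖)^4 := pow_le_pow_left₀ (by positivity) hb 4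
                  have hk7 : ‖k‖^4 ≤ ‖k‖^7 := pow_le_pow_right₀ hk1 (by norm_num)
                  nlinarith [sq_nonneg D, pow_nonneg (norm_nonneg k) 4]
        _ ≤ ∫⁻ k : E3, ENNReal.ofReal (16*D^2) * ENNReal.ofReal ((1+‖k‖) ^ (-4:ℝ)) :=
            setLIntegral_le_lintegral _ _
        _ = ENNReal.ofReal (16*D^2) * ∫⁻ k : E3, ENNReal.ofReal ((1+‖k‖) ^ (-4:ℝ)) :=
            lintegral_const_mul' _ _ ENNReal.ofReal_ne_top
        _ < ⊤ := by
            refine ENNReal.mul_lt_top ENNReal.ofReal_lt_top ?_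
            have h34 : ((Module.finrank ℝ (EuclideanSpace ℝ (Fin 3)) : ℝ)) < 4 := by
              rw [finrank_euclideanSpace_fin]; norm_num
            exact finite_integral_one_add_norm h34

end Aux
end

section
/- Let R > 0 and let f : ℝ³ → ℝ be the indicator function of the closed ball of radius R centered at the origin, with Fourier transform f̂(k) = ∫_{ℝ³} f(x) exp(i k·x) dx. Then ∫_{ℝ³} |k|^{-1} |f̂(k)|² dk < ∞ while ∫_{ℝ³} |k| |f̂(k)|² dk = ∞; that is, the top-hat function belongs to the homogeneous Sobolev space Ḣ^{-1/2}(ℝ³) but not to Ḣ^{1/2}(ℝ³). -/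
open MeasureTheory Real

section Aux
open Set

lemma key1d (R κ : ℝ) (hκ : κ ≠ 0) :
    ∫ t in (-R)..R, ((R^2 - t^2 : ℝ) : ℂ) * Complex.exp (Complex.I * κ * t)
      = ((4 * (Real.sin (κ*R) - κ*R*Real.cos (κ*R)) / κ^3 : ℝ) : ℂ) := by
  have hκC : (κ:ℂ) ≠ 0 := by simpa using hκ
  set G : ℝ → ℂ := fun t => Complex.exp (Complex.I * κ * t) *
    (-Complex.I * ((R:ℂ)^2 - (t:ℂ)^2) / κ - 2 * (t:ℂ) / κ^2 - 2 * Complex.I / κ^3) with hG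
  have hderiv : ∀ t : ℝ, HasDerivAt G (((R^2 - t^2 : ℝ) : ℂ) * Complex.exp (Complex.I * κ * t)) t := by
    intro t
    have hofReal : HasDerivAt (fun s : ℝ => (s : ℂ)) 1 t := by
      simpa using (hasDerivAt_id t).ofReal_comp
    have hexp : HasDerivAt (fun s : ℝ => Complex.exp (Complex.I * κ * s))
        (Complex.exp (Complex.I * κ * t) * (Complex.I * κ)) t := by
      have := (hofReal.const_mul (Complex.I * κ)).cexp
      simpa using this
    have hsq : HasDerivAt (fun s : ℝ => ((s:ℂ))^2) (2 * (t:ℂ)) t := by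
      have := hofReal.fun_mul hofReal
      simpa [two_mul, pow_two] using this
    have h1 : HasDerivAt (fun s : ℝ => -Complex.I * ((R:ℂ)^2 - (s:ℂ)^2)) (-Complex.I * (0 - 2 * (t:ℂ))) t :=
      (((hasDerivAt_const t ((R:ℂ)^2)).sub hsq)).const_mul (-Complex.I)
    have h2 : HasDerivAt (fun s : ℝ => 2 * (s:ℂ)) (2 : ℂ) t := by
      simpa using hofReal.const_mul (2:ℂ)
    have hpoly : HasDerivAt (fun s : ℝ =>
        -Complex.I * ((R:ℂ)^2 - (s:ℂ)^2) / κ - 2 * (s:ℂ) / κ^2 - 2 * Complex.I / κ^3)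
        (-Complex.I * (0 - 2 * (t:ℂ)) / κ - 2 / κ^2) t :=
      ((h1.div_const (κ:ℂ)).sub (h2.div_const ((κ:ℂ)^2))).sub_const _
    have := hexp.fun_mul hpoly
    refine this.congr_deriv (Eq.symm ?_)
    field_simp
    ring_nf
    simp only [Complex.I_sq]
    field_simp
    push_cast
    ring
  have hint : IntervalIntegrable (fun t : ℝ => ((R^2 - t^2 : ℝ) : ℂ) * Complex.exp (Complex.I * κ * t))
      MeasureTheory.volume (-R) R := by
    apply Continuous.intervalIntegrable
    have : Continuous fun t : ℝ => Complex.I * κ * t := by continuity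
    exact (Complex.continuous_ofReal.comp (by continuity)).mul (Complex.continuous_exp.comp this)
  have heval := intervalIntegral.integral_eq_sub_of_hasDerivAt (fun t _ => hderiv t) hint
  rw [heval, hG]
  simp only [Complex.ofReal_neg]
  rw [show Complex.I * κ * (R:ℂ) = ((κ*R : ℝ):ℂ) * Complex.I by push_cast; ring,
    show Complex.I * κ * (-(R:ℂ)) = ((-(κ*R) : ℝ):ℂ) * Complex.I by push_cast; ring,
    Complex.exp_mul_I, Complex.exp_mul_I,
    ← Complex.ofReal_cos, ← Complex.ofReal_sin, ← Complex.ofReal_cos, ← Complex.ofReal_sin,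
    Real.cos_neg, Real.sin_neg]
  push_cast
  field_simp
  ring_nf
  simp only [Complex.I_sq]
  ring

-- Volume of the 2D "disc" in `Fin 2 → ℝ`
lemma vol2 (s : ℝ) :
    volume {y : Fin 2 → ℝ | ∑ j, (y j)^2 ≤ s} = ENNReal.ofReal (π * s) := by
  rcases le_or_gt 0 s with hs | hs
  · have hmeas : MeasurableSet {y : Fin 2 → ℝ | ∑ j, (y j)^2 ≤ s} := by
      apply measurableSet_le (by fun_prop) measurable_const
    have hmp := EuclideanSpace.volume_preserving_symm_measurableEquiv_toLp (Fin 2)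
    have hpre := hmp.measure_preimage hmeas.nullMeasurableSet
    have hset : (MeasurableEquiv.toLp 2 (Fin 2 → ℝ)).symm ⁻¹' {y : Fin 2 → ℝ | ∑ j, (y j)^2 ≤ s}
        = Metric.closedBall (0 : EuclideanSpace ℝ (Fin 2)) (Real.sqrt s) := by
      ext x
      simp only [Set.mem_preimage, Set.mem_setOf_eq, Metric.mem_closedBall, dist_zero_right]
      have hx : (MeasurableEquiv.toLp 2 (Fin 2 → ℝ)).symm x = fun j => x j := rfl
      rw [hx, EuclideanSpace.norm_eq]
      have h1 : ∑ j, ((fun j => x j) j)^2 = ∑ j : Fin 2, ‖x j‖^2 := by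
        simp [Real.norm_eq_abs, sq_abs]
      rw [h1]
      rw [show Real.sqrt s = Real.sqrt s from rfl]
      constructor
      · intro h
        calc √(∑ j : Fin 2, ‖x j‖ ^ 2) ≤ √s := Real.sqrt_le_sqrt h
          _ = _ := rfl
      · intro h
        have := Real.sqrt_le_sqrt h  -- not directly
        calc ∑ j : Fin 2, ‖x j‖ ^ 2 = √(∑ j : Fin 2, ‖x j‖ ^ 2) ^ 2 := by
              rw [Real.sq_sqrt]; positivity
          _ ≤ √s ^ 2 := by gcongr
          _ = s := Real.sq_sqrt hs
    rw [← hpre, hset, EuclideanSpace.volume_closedBall]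
    have hcard : Fintype.card (Fin 2) = 2 := by simp
    rw [hcard]
    have hΓ : Real.Gamma ((2:ℕ) / 2 + 1) = 1 := by
      rw [show ((2:ℕ):ℝ)/2 + 1 = 2 by norm_num]
      exact Real.Gamma_two
    rw [hΓ]
    rw [show (√π ^ 2 / 1 : ℝ) = π by rw [Real.sq_sqrt Real.pi_nonneg]; ring]
    rw [← ENNReal.ofReal_pow (Real.sqrt_nonneg s), Real.sq_sqrt hs,
      ← ENNReal.ofReal_mul hs]
    rw [mul_comm]
  · have hempty : {y : Fin 2 → ℝ | ∑ j, (y j)^2 ≤ s} = ∅ := by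
      ext y; simp only [Set.mem_setOf_eq, Set.mem_empty_iff_false, iff_false, not_le]
      calc s < 0 := hs
        _ ≤ ∑ j, (y j)^2 := by positivity
    rw [hempty, measure_empty, Eq.comm, ENNReal.ofReal_eq_zero]
    nlinarith [Real.pi_pos]

set_option maxHeartbeats 2000000 in
lemma ft_ind (R : ℝ) (hR : 0 < R) (k : EuclideanSpace ℝ (Fin 3)) (hk : k ≠ 0) :
    ft (fun x => (((Metric.closedBall (0 : EuclideanSpace ℝ (Fin 3)) R).indicator
        (fun _ => (1:ℝ)) x : ℝ) : ℂ)) k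
      = ((4 * π * (Real.sin (‖k‖*R) - ‖k‖*R*Real.cos (‖k‖*R)) / ‖k‖^3 : ℝ) : ℂ) := by
  set κ : ℝ := ‖k‖ with hκdef
  have hκ : κ ≠ 0 := norm_ne_zero_iff.mpr hk
  -- Step A : rewrite as integral of an indicator
  have stepA : ft (fun x => (((Metric.closedBall (0 : EuclideanSpace ℝ (Fin 3)) R).indicator
        (fun _ => (1:ℝ)) x : ℝ) : ℂ)) k
      = ∫ x : EuclideanSpace ℝ (Fin 3),
          (Metric.closedBall (0 : EuclideanSpace ℝ (Fin 3)) R).indicator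
            (fun x => Complex.exp (Complex.I * ((inner ℝ k x : ℝ) : ℂ))) x := by
    unfold ft
    congr 1
    funext x
    by_cases hx : x ∈ Metric.closedBall (0 : EuclideanSpace ℝ (Fin 3)) R
    · simp [Set.indicator_of_mem hx]
    · simp [Set.indicator_of_notMem hx]
  rw [stepA]
  -- Step B : rotation
  set u : EuclideanSpace ℝ (Fin 3) := κ⁻¹ • k with hu
  have hunorm : ‖u‖ = 1 := by
    rw [hu, norm_smul, norm_inv, Real.norm_eq_abs, abs_of_nonneg (norm_nonneg k)]
    field_simp
  have horth : Orthonormal ℝ (Set.restrict ({0} : Set (Fin 3)) (fun _ => u)) := by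
    rw [orthonormal_iff_ite]
    rintro ⟨i, hi⟩ ⟨j, hj⟩
    simp only [Set.mem_singleton_iff] at hi hj
    subst hi; subst hj
    simp only [Set.restrict_apply, if_pos rfl]
    rw [real_inner_self_eq_norm_sq, show ({0} : Set (Fin 3)).restrict (fun _ => u) ⟨0, hi⟩ = u from rfl, hunorm]
    norm_num
  have hcard : Module.finrank ℝ (EuclideanSpace ℝ (Fin 3)) = Fintype.card (Fin 3) := by
    simp [finrank_euclideanSpace_fin]
  obtain ⟨b, hb⟩ := horth.exists_orthonormalBasis_extension_of_card_eq hcard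
  have hb0 : b 0 = u := hb 0 rfl
  set g := b.repr.symm with hg
  have hg0 : g (EuclideanSpace.single 0 1) = u := by
    rw [hg, OrthonormalBasis.repr_symm_single, hb0]
  have hgk : g.symm k = κ • EuclideanSpace.single (0 : Fin 3) (1:ℝ) := by
    have h1 : g (κ • EuclideanSpace.single (0 : Fin 3) (1:ℝ)) = k := by
      rw [g.map_smul, hg0, hu, smul_smul, mul_inv_cancel₀ hκ, one_smul]
    rw [← h1, LinearIsometryEquiv.symm_apply_apply]
  have hmpg := LinearIsometryEquiv.measurePreserving g
  have hembg : MeasurableEmbedding g := g.toHomeomorph.measurableEmbedding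
  rw [← hmpg.integral_comp hembg]
  have stepB : (fun x => (Metric.closedBall (0 : EuclideanSpace ℝ (Fin 3)) R).indicator
        (fun x => Complex.exp (Complex.I * ((inner ℝ k x : ℝ) : ℂ))) (g x))
      = fun x => (Metric.closedBall (0 : EuclideanSpace ℝ (Fin 3)) R).indicator
        (fun x => Complex.exp (Complex.I * ((κ * x 0 : ℝ) : ℂ))) x := by
    funext x
    have hmem : g x ∈ Metric.closedBall (0 : EuclideanSpace ℝ (Fin 3)) R
        ↔ x ∈ Metric.closedBall (0 : EuclideanSpace ℝ (Fin 3)) R := by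
      simp [Metric.mem_closedBall, dist_zero_right, g.norm_map]
    have hinner : (inner ℝ k (g x) : ℝ) = κ * x 0 := by
      have h1 : (inner ℝ k (g x) : ℝ) = inner ℝ (g.symm k) x := by
        rw [← g.inner_map_map (g.symm k) x, g.apply_symm_apply]
      rw [h1, hgk, real_inner_smul_left]
      congr 1
      rw [EuclideanSpace.inner_single_left]
      simp
    by_cases hx : x ∈ Metric.closedBall (0 : EuclideanSpace ℝ (Fin 3)) R
    · rw [Set.indicator_of_mem (hmem.mpr hx), Set.indicator_of_mem hx, hinner]
    · rw [Set.indicator_of_notMem (fun h => hx (hmem.mp h)), Set.indicator_of_notMem hx]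
  rw [stepB]
  -- Step C : to the Pi type
  have hmp1 := EuclideanSpace.volume_preserving_symm_measurableEquiv_toLp (Fin 3)
  have hemb1 : MeasurableEmbedding (MeasurableEquiv.toLp 2 (Fin 3 → ℝ)).symm :=
    (MeasurableEquiv.toLp 2 (Fin 3 → ℝ)).symm.measurableEmbedding
  set G2 : (Fin 3 → ℝ) → ℂ := fun y =>
    Set.indicator {y : Fin 3 → ℝ | ∑ j, (y j)^2 ≤ R^2}
      (fun y => Complex.exp (Complex.I * ((κ * y 0 : ℝ) : ℂ))) y with hG2
  have stepC : (fun x : EuclideanSpace ℝ (Fin 3) =>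
      (Metric.closedBall (0 : EuclideanSpace ℝ (Fin 3)) R).indicator
        (fun x => Complex.exp (Complex.I * ((κ * x 0 : ℝ) : ℂ))) x)
      = fun x => G2 ((MeasurableEquiv.toLp 2 (Fin 3 → ℝ)).symm x) := by
    funext x
    have happ : (MeasurableEquiv.toLp 2 (Fin 3 → ℝ)).symm x = fun j => x j := rfl
    have hmem : x ∈ Metric.closedBall (0 : EuclideanSpace ℝ (Fin 3)) R
        ↔ (fun j => x j) ∈ {y : Fin 3 → ℝ | ∑ j, (y j)^2 ≤ R^2} := by
      simp only [Metric.mem_closedBall, dist_zero_right, Set.mem_setOf_eq]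
      rw [EuclideanSpace.norm_eq]
      have h1 : ∑ j : Fin 3, ((fun j => x j) j)^2 = ∑ j : Fin 3, ‖x j‖^2 := by
        simp [Real.norm_eq_abs, sq_abs]
      rw [h1]
      constructor
      · intro h
        calc ∑ j : Fin 3, ‖x j‖ ^ 2 = √(∑ j : Fin 3, ‖x j‖ ^ 2) ^ 2 := by
              rw [Real.sq_sqrt]; positivity
          _ ≤ R ^ 2 := by gcongr
      · intro h
        calc √(∑ j : Fin 3, ‖x j‖ ^ 2) ≤ √(R^2) := Real.sqrt_le_sqrt h
          _ = R := Real.sqrt_sq hR.le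
    rw [hG2]
    simp only [Set.indicator_apply, happ]
    by_cases hx : x ∈ Metric.closedBall (0 : EuclideanSpace ℝ (Fin 3)) R
    · rw [Set.indicator_of_mem hx, if_pos (hmem.mp hx)]
    · rw [Set.indicator_of_notMem hx, if_neg (fun h => hx (hmem.mpr h))]
  rw [stepC, hmp1.integral_comp hemb1]
  -- Step D : split off the first coordinate
  have hmp2 := MeasureTheory.volume_preserving_piFinSuccAbove (fun _ : Fin 3 => ℝ) 0
  set e2 := MeasurableEquiv.piFinSuccAbove (fun _ : Fin 3 => ℝ) 0 with he2
  set K : ℝ × (Fin 2 → ℝ) → ℂ := fun p =>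
    Set.indicator {p : ℝ × (Fin 2 → ℝ) | p.1^2 + ∑ j, (p.2 j)^2 ≤ R^2}
      (fun p => Complex.exp (Complex.I * ((κ * p.1 : ℝ) : ℂ))) p with hK
  have stepD : G2 = fun y => K (e2 y) := by
    funext y
    have happ : e2 y = (y 0, fun j => y (Fin.succAbove 0 j)) := rfl
    have hsum : ∑ j : Fin 3, (y j)^2
        = (y 0)^2 + ∑ j : Fin 2, (y (Fin.succAbove 0 j))^2 :=
      Fin.sum_univ_succAbove (fun j => (y j)^2) 0
    rw [hG2, hK, happ]
    simp only [Set.indicator_apply, Set.mem_setOf_eq]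
    have hiff : (∑ j : Fin 3, (y j)^2 ≤ R^2) ↔
        ((y 0)^2 + ∑ j : Fin 2, (y (Fin.succAbove 0 j))^2 ≤ R^2) := by rw [hsum]
    by_cases hy : ∑ j : Fin 3, (y j)^2 ≤ R^2
    · rw [if_pos hy, if_pos (hiff.mp hy)]
    · rw [if_neg hy, if_neg (fun h => hy (hiff.mpr h))]
  rw [stepD, hmp2.integral_comp e2.measurableEmbedding]
  -- Step E : Fubini
  have hScl : IsClosed {p : ℝ × (Fin 2 → ℝ) | p.1^2 + ∑ j, (p.2 j)^2 ≤ R^2} := by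
    apply isClosed_le _ continuous_const
    fun_prop
  have hSmeas := hScl.measurableSet
  have hSfin : volume {p : ℝ × (Fin 2 → ℝ) | p.1^2 + ∑ j, (p.2 j)^2 ≤ R^2} ≠ ⊤ := by
    have hsub : {p : ℝ × (Fin 2 → ℝ) | p.1^2 + ∑ j, (p.2 j)^2 ≤ R^2}
        ⊆ Metric.closedBall 0 R := by
      intro p hp
      simp only [Set.mem_setOf_eq] at hp
      have h1 : ∀ j, (p.2 j)^2 ≤ R^2 := by
        intro j
        have : 0 ≤ ∑ j' ∈ Finset.univ.erase j, (p.2 j')^2 := by positivity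
        have hj : (p.2 j)^2 ≤ ∑ j', (p.2 j')^2 :=
          Finset.single_le_sum (f := fun j' => (p.2 j')^2) (fun _ _ => by positivity)
            (Finset.mem_univ j)
        nlinarith [sq_nonneg p.1]
      have h0 : p.1^2 ≤ R^2 := by
        have : 0 ≤ ∑ j, (p.2 j)^2 := by positivity
        nlinarith
      rw [Metric.mem_closedBall, dist_zero_right, Prod.norm_def]
      apply max_le
      · rw [Real.norm_eq_abs, ← abs_of_pos hR, ← Real.sqrt_sq_eq_abs, ← Real.sqrt_sq_eq_abs]
        exact Real.sqrt_le_sqrt h0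
      · rw [pi_norm_le_iff_of_nonneg hR.le]
        intro j
        rw [Real.norm_eq_abs, ← abs_of_pos hR, ← Real.sqrt_sq_eq_abs, ← Real.sqrt_sq_eq_abs]
        exact Real.sqrt_le_sqrt (h1 j)
    exact (lt_of_le_of_lt (measure_mono hsub) measure_closedBall_lt_top).ne
  have hKint : Integrable K := by
    rw [hK]
    rw [MeasureTheory.integrable_indicator_iff hSmeas]
    apply Measure.integrableOn_of_bounded (M := 1) hSfin
    · apply Continuous.aestronglyMeasurable
      apply Complex.continuous_exp.comp
      apply Continuous.mul continuous_const
      exact Complex.continuous_ofReal.comp (continuous_const.mul continuous_fst)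
    · filter_upwards with p
      simp [Complex.norm_exp]
  rw [MeasureTheory.Measure.volume_eq_prod] at hKint ⊢
  rw [MeasureTheory.integral_prod K hKint]
  -- Step F : inner integral
  have stepF : ∀ t : ℝ, (∫ y : Fin 2 → ℝ, K (t, y))
      = (ENNReal.ofReal (π * (R^2 - t^2))).toReal • Complex.exp (Complex.I * ((κ * t : ℝ) : ℂ)) := by
    intro t
    have hfun : (fun y : Fin 2 → ℝ => K (t, y))
        = Set.indicator {y : Fin 2 → ℝ | ∑ j, (y j)^2 ≤ R^2 - t^2}
            (fun _ => Complex.exp (Complex.I * ((κ * t : ℝ) : ℂ))) := by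
      funext y
      rw [hK]
      simp only [Set.indicator_apply, Set.mem_setOf_eq]
      have h : t^2 + ∑ j, (y j)^2 ≤ R^2 ↔ ∑ j, (y j)^2 ≤ R^2 - t^2 := by constructor <;> intro <;> linarith
      simp only [h]
    rw [hfun]
    have hTmeas : MeasurableSet {y : Fin 2 → ℝ | ∑ j, (y j)^2 ≤ R^2 - t^2} := by
      apply measurableSet_le (by fun_prop) measurable_const
    rw [MeasureTheory.integral_indicator_const _ hTmeas, measureReal_def, vol2]
  simp_rw [stepF]
  -- Step G : reduce to the 1D interval integral
  have stepG : (fun t : ℝ => (ENNReal.ofReal (π * (R^2 - t^2))).toReal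
        • Complex.exp (Complex.I * ((κ * t : ℝ) : ℂ)))
      = Set.indicator (Set.Icc (-R) R)
          (fun t => ((π * (R^2 - t^2) : ℝ) : ℂ) * Complex.exp (Complex.I * κ * t)) := by
    funext t
    have harg : Complex.I * ((κ * t : ℝ) : ℂ) = Complex.I * κ * t := by push_cast; ring
    by_cases ht : t ∈ Set.Icc (-R) R
    · have ht' := Set.mem_Icc.mp ht
      have hpos : 0 ≤ π * (R^2 - t^2) := by
        have : t^2 ≤ R^2 := sq_le_sq' ht'.1 ht'.2
        have := Real.pi_pos
        nlinarith
      rw [Set.indicator_of_mem ht, ENNReal.toReal_ofReal hpos, harg]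
      rw [Complex.real_smul]
    · rw [Set.indicator_of_notMem ht]
      have hneg : π * (R^2 - t^2) ≤ 0 := by
        simp only [Set.mem_Icc, not_and_or, not_le] at ht
        have h2 : R^2 < t^2 := by
          rcases ht with h | h
          · nlinarith
          · nlinarith
        have := Real.pi_pos
        nlinarith
      rw [ENNReal.ofReal_eq_zero.mpr hneg]
      simp
  rw [stepG, MeasureTheory.integral_indicator measurableSet_Icc,
    MeasureTheory.integral_Icc_eq_integral_Ioc,
    ← intervalIntegral.integral_of_le (by linarith : -R ≤ R)]
  have hpull : ∀ t : ℝ, ((π * (R^2 - t^2) : ℝ) : ℂ) * Complex.exp (Complex.I * κ * t)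
      = (π : ℂ) * (((R^2 - t^2 : ℝ) : ℂ) * Complex.exp (Complex.I * κ * t)) := by
    intro t; push_cast; ring
  simp_rw [hpull]
  rw [intervalIntegral.integral_const_mul, key1d R κ hκ]
  push_cast
  ring

-- trivial bound on the Fourier transform
lemma ft_bound (R : ℝ) (hR : 0 < R) (k : EuclideanSpace ℝ (Fin 3)) :
    ‖ft (fun x => (((Metric.closedBall (0 : EuclideanSpace ℝ (Fin 3)) R).indicator
        (fun _ => (1:ℝ)) x : ℝ) : ℂ)) k‖
      ≤ (volume (Metric.closedBall (0 : EuclideanSpace ℝ (Fin 3)) R)).toReal := by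
  unfold ft
  refine le_trans (norm_integral_le_integral_norm _) ?_
  have heq : ∀ x : EuclideanSpace ℝ (Fin 3),
      ‖((((Metric.closedBall (0 : EuclideanSpace ℝ (Fin 3)) R).indicator (fun _ => (1:ℝ)) x : ℝ)) : ℂ)
        * Complex.exp (Complex.I * ((inner ℝ k x : ℝ) : ℂ))‖
      = (Metric.closedBall (0 : EuclideanSpace ℝ (Fin 3)) R).indicator (fun _ => (1:ℝ)) x := by
    intro x
    rw [norm_mul]
    have h2 : ‖Complex.exp (Complex.I * ((inner ℝ k x : ℝ) : ℂ))‖ = 1 := by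
      simp [Complex.norm_exp]
    rw [h2, mul_one, Complex.norm_real, Real.norm_eq_abs]
    by_cases hx : x ∈ Metric.closedBall (0 : EuclideanSpace ℝ (Fin 3)) R
    · rw [Set.indicator_of_mem hx]; norm_num
    · rw [Set.indicator_of_notMem hx]; norm_num
  rw [MeasureTheory.integral_congr_ae (ae_of_all _ heq),
    MeasureTheory.integral_indicator_const _ Metric.isClosed_closedBall.measurableSet]
  simp [measureReal_def]

-- the small-ball lintegral of ‖k‖⁻¹ is finite
lemma smallball : ∫⁻ k in Metric.closedBall (0 : EuclideanSpace ℝ (Fin 3)) 1,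
    ENNReal.ofReal (‖k‖⁻¹) < ⊤ := by
  set B := volume (Metric.ball (0 : EuclideanSpace ℝ (Fin 3)) 1) with hB
  set S : ℕ → Set (EuclideanSpace ℝ (Fin 3)) := fun n =>
    Metric.closedBall 0 ((2:ℝ)⁻¹^n) \ Metric.closedBall 0 ((2:ℝ)⁻¹^(n+1)) with hS
  have hcover : Metric.closedBall (0 : EuclideanSpace ℝ (Fin 3)) 1
      ⊆ {0} ∪ ⋃ n, S n := by
    intro k hk
    by_cases hk0 : k = 0
    · exact Set.mem_union_left _ (by simp [hk0])
    · refine Set.mem_union_right _ ?_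
      have hkpos : 0 < ‖k‖ := norm_pos_iff.mpr hk0
      have hk1 : ‖k‖ ≤ 1 := by simpa [Metric.mem_closedBall, dist_zero_right] using hk
      have hex : ∃ n : ℕ, (2:ℝ)⁻¹^n < ‖k‖ :=
        exists_pow_lt_of_lt_one hkpos (by norm_num)
      set n := Nat.find hex with hn
      have hnlt : (2:ℝ)⁻¹^n < ‖k‖ := Nat.find_spec hex
      have hn0 : n ≠ 0 := by
        intro h
        rw [h] at hnlt
        simp at hnlt
        linarith
      have hpred : ¬ ((2:ℝ)⁻¹^(n-1) < ‖k‖) := Nat.find_min hex (Nat.sub_lt (Nat.pos_of_ne_zero hn0) one_pos)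
      push_neg at hpred
      refine Set.mem_iUnion.mpr ⟨n - 1, ?_⟩
      rw [hS]
      constructor
      · simpa [Metric.mem_closedBall, dist_zero_right] using hpred
      · have : n - 1 + 1 = n := Nat.succ_pred_eq_of_pos (Nat.pos_of_ne_zero hn0)
        rw [this]
        simp only [Metric.mem_closedBall, dist_zero_right, not_le]
        exact hnlt
  calc ∫⁻ k in Metric.closedBall (0 : EuclideanSpace ℝ (Fin 3)) 1, ENNReal.ofReal (‖k‖⁻¹)
      ≤ ∫⁻ k in ({0} ∪ ⋃ n, S n), ENNReal.ofReal (‖k‖⁻¹) := lintegral_mono_set hcover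
    _ ≤ (∫⁻ k in ({0} : Set (EuclideanSpace ℝ (Fin 3))), ENNReal.ofReal (‖k‖⁻¹))
        + ∫⁻ k in (⋃ n, S n), ENNReal.ofReal (‖k‖⁻¹) := lintegral_union_le _ _ _
    _ ≤ 0 + ∑' n, ∫⁻ k in S n, ENNReal.ofReal (‖k‖⁻¹) := by
        gcongr
        · rw [MeasureTheory.setLIntegral_measure_zero _ _ (measure_singleton 0)]
        · exact lintegral_iUnion_le _ _
    _ < ⊤ := by
        rw [zero_add]
        have hterm : ∀ n : ℕ, ∫⁻ k in S n, ENNReal.ofReal (‖k‖⁻¹)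
            ≤ ENNReal.ofReal (2 * (4⁻¹:ℝ)^n) * B := by
          intro n
          have hb : ∀ k ∈ S n, ENNReal.ofReal (‖k‖⁻¹) ≤ ENNReal.ofReal ((2:ℝ)^(n+1)) := by
            intro k hk
            rw [hS] at hk
            obtain ⟨_, hk2⟩ := hk
            simp only [Metric.mem_closedBall, dist_zero_right, not_le] at hk2
            apply ENNReal.ofReal_le_ofReal
            calc ‖k‖⁻¹ ≤ ((2⁻¹:ℝ)^(n+1))⁻¹ := by
                  apply inv_anti₀ (by positivity) hk2.le
              _ = 2^(n+1) := by rw [← inv_pow, inv_inv]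
          have hSmeas : MeasurableSet (S n) :=
            Metric.isClosed_closedBall.measurableSet.diff Metric.isClosed_closedBall.measurableSet
          calc ∫⁻ k in S n, ENNReal.ofReal (‖k‖⁻¹)
              ≤ ∫⁻ _ in S n, ENNReal.ofReal ((2:ℝ)^(n+1)) := setLIntegral_mono' hSmeas hb
            _ = ENNReal.ofReal ((2:ℝ)^(n+1)) * volume (S n) := setLIntegral_const _ _
            _ ≤ ENNReal.ofReal ((2:ℝ)^(n+1)) * volume (Metric.closedBall (0 : EuclideanSpace ℝ (Fin 3)) ((2:ℝ)⁻¹^n)) := by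
                gcongr
                exact Set.diff_subset
            _ = ENNReal.ofReal ((2:ℝ)^(n+1)) * (ENNReal.ofReal (((2:ℝ)⁻¹^n)^Module.finrank ℝ (EuclideanSpace ℝ (Fin 3))) * B) := by
                rw [Measure.addHaar_closedBall _ _ (by positivity)]
            _ = ENNReal.ofReal (2 * (4⁻¹:ℝ)^n) * B := by
                rw [← mul_assoc, ← ENNReal.ofReal_mul (by positivity)]
                congr 2
                rw [finrank_euclideanSpace_fin]
                rw [show ((2:ℝ)⁻¹^n)^3 = (2:ℝ)⁻¹^(3*n) by rw [← pow_mul, mul_comm]]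
                rw [show (4⁻¹:ℝ)^n = (2:ℝ)⁻¹^(2*n) by
                  rw [show ((4:ℝ))⁻¹ = (2:ℝ)⁻¹^2 by norm_num, ← pow_mul]]
                rw [pow_add, inv_pow, inv_pow]
                have h2 : (2:ℝ)^(3*n) = 2^n * 2^(2*n) := by
                  rw [← pow_add]; ring_nf
                field_simp [h2]
                ring
        calc ∑' n, ∫⁻ k in S n, ENNReal.ofReal (‖k‖⁻¹)
            ≤ ∑' n, ENNReal.ofReal (2 * (4⁻¹:ℝ)^n) * B := ENNReal.tsum_le_tsum hterm
          _ = (∑' n, ENNReal.ofReal (2 * (4⁻¹:ℝ)^n)) * B := ENNReal.tsum_mul_right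
          _ = (∑' n : ℕ, ENNReal.ofReal 2 * (ENNReal.ofReal (4⁻¹:ℝ))^n) * B := by
              congr 1
              apply tsum_congr
              intro n
              rw [← ENNReal.ofReal_pow (by norm_num), ← ENNReal.ofReal_mul (by norm_num)]
          _ = ENNReal.ofReal 2 * (1 - ENNReal.ofReal (4⁻¹:ℝ))⁻¹ * B := by
              rw [ENNReal.tsum_mul_left, ENNReal.tsum_geometric]
          _ < ⊤ := by
              apply ENNReal.mul_lt_top
              · apply ENNReal.mul_lt_top ENNReal.ofReal_lt_top
                rw [ENNReal.inv_lt_top, tsub_pos_iff_lt]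
                exact lt_of_lt_of_le (ENNReal.ofReal_lt_one.mpr (by norm_num)) le_rfl
              · exact measure_ball_lt_top

lemma sinbound (u : ℝ) (hu : 0 ≤ u) : |Real.sin u - u * Real.cos u| ≤ 1 + u := by
  calc |Real.sin u - u * Real.cos u| ≤ |Real.sin u| + |u * Real.cos u| := abs_sub _ _
    _ ≤ 1 + u := by
      gcongr
      · exact Real.abs_sin_le_one u
      · rw [abs_mul, abs_of_nonneg hu]
        calc u * |Real.cos u| ≤ u * 1 := by gcongr; exact Real.abs_cos_le_one u
          _ = u := mul_one u

set_option maxHeartbeats 1000000 in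
lemma part1 (R : ℝ) (hR : 0 < R) :
    ∫⁻ k : EuclideanSpace ℝ (Fin 3), ENNReal.ofReal (‖k‖ ^ (-1 : ℝ) *
      ‖ft (fun x => (((Metric.closedBall (0 : EuclideanSpace ℝ (Fin 3)) R).indicator
        (fun _ => (1:ℝ)) x : ℝ) : ℂ)) k‖ ^ 2) < ⊤ := by
  set F : EuclideanSpace ℝ (Fin 3) → ℂ := fun k =>
    ft (fun x => (((Metric.closedBall (0 : EuclideanSpace ℝ (Fin 3)) R).indicator
        (fun _ => (1:ℝ)) x : ℝ) : ℂ)) k with hF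
  set V : ℝ := (volume (Metric.closedBall (0 : EuclideanSpace ℝ (Fin 3)) R)).toReal with hV
  have hV0 : 0 ≤ V := ENNReal.toReal_nonneg
  set m : ℝ := max 1 R with hm
  have hm1 : (1:ℝ) ≤ m := le_max_left _ _
  set C₂ : ℝ := 16*π^2*m^2 * 2^7 with hC₂
  have hC₂0 : 0 ≤ C₂ := by positivity
  have hpt : ∀ k : EuclideanSpace ℝ (Fin 3),
      ENNReal.ofReal (‖k‖ ^ (-1 : ℝ) * ‖F k‖ ^ 2)
        ≤ (Metric.closedBall (0 : EuclideanSpace ℝ (Fin 3)) 1).indicator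
            (fun k => ENNReal.ofReal (V^2 * ‖k‖⁻¹)) k
          + ENNReal.ofReal (C₂ * (1+‖k‖) ^ (-(5:ℝ))) := by
    intro k
    by_cases hk0 : k = 0
    · subst hk0
      simp [Real.zero_rpow (by norm_num : (-1:ℝ) ≠ 0)]
    have hκpos : 0 < ‖k‖ := norm_pos_iff.mpr hk0
    have hrw : ‖k‖ ^ (-1 : ℝ) = ‖k‖⁻¹ := Real.rpow_neg_one ‖k‖
    rcases le_or_gt ‖k‖ 1 with hk1 | hk1
    · have hmem : k ∈ Metric.closedBall (0 : EuclideanSpace ℝ (Fin 3)) 1 := by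
        simpa [Metric.mem_closedBall, dist_zero_right] using hk1
      rw [Set.indicator_of_mem hmem]
      refine le_trans ?_ le_self_add
      apply ENNReal.ofReal_le_ofReal
      rw [hrw]
      have hVb : ‖F k‖ ≤ V := by rw [hV]; exact ft_bound R hR k
      have hpow2 : ‖F k‖^2 ≤ V^2 := by nlinarith [norm_nonneg (F k)]
      calc ‖k‖⁻¹ * ‖F k‖^2 ≤ ‖k‖⁻¹ * V^2 := by gcongr
        _ = V^2 * ‖k‖⁻¹ := by ring
    · have hmem : k ∉ Metric.closedBall (0 : EuclideanSpace ℝ (Fin 3)) 1 := by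
        simp [Metric.mem_closedBall, dist_zero_right]; linarith
      rw [Set.indicator_of_notMem hmem, zero_add]
      apply ENNReal.ofReal_le_ofReal
      set κ := ‖k‖ with hκ
      set a : ℝ := 1 + κ with ha
      have ha0 : 0 < a := by positivity
      have hFle : ‖F k‖ ≤ 4*π*m*a/κ^3 := by
        have hFval : F k = ((4 * π * (Real.sin (‖k‖*R) - ‖k‖*R*Real.cos (‖k‖*R)) / ‖k‖^3 : ℝ) : ℂ) :=
          ft_ind R hR k hk0
        rw [hFval, Complex.norm_real, Real.norm_eq_abs, ← hκ]
        rw [abs_div, abs_of_pos (by positivity : (0:ℝ) < κ^3)]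
        rw [div_le_div_iff_of_pos_right (by positivity)]
        calc |4 * π * (Real.sin (κ*R) - κ*R*Real.cos (κ*R))|
            = 4*π*|Real.sin (κ*R) - κ*R*Real.cos (κ*R)| := by
              rw [abs_mul, abs_of_pos (by positivity : (0:ℝ) < 4*π)]
          _ ≤ 4*π*(1 + κ*R) := by
              gcongr
              exact sinbound _ (by positivity)
          _ ≤ 4*π*(m*a) := by
              gcongr
              have h1 : (1:ℝ) ≤ m * 1 := by linarith
              have h2 : κ*R ≤ m*κ := by
                rw [mul_comm κ R]
                gcongr
                exact le_max_right 1 R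
              calc 1 + κ*R ≤ m*1 + m*κ := by gcongr
                _ = m*a := by rw [ha]; ring
          _ = 4*π*m*a := by ring
      have step1 : κ ^ (-1 : ℝ) * ‖F k‖ ^ 2 ≤ 16*π^2*m^2*a^2/κ^7 := by
        rw [hrw]
        calc κ⁻¹ * ‖F k‖^2 ≤ κ⁻¹ * (4*π*m*a/κ^3)^2 := by
              gcongr
          _ = 16*π^2*m^2*a^2/κ^7 := by
              field_simp
              ring
      have step2 : 16*π^2*m^2*a^2/κ^7 ≤ C₂ * (1+κ) ^ (-(5:ℝ)) := by
        have h2κ : a ≤ 2*κ := by rw [ha]; linarith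
        have hpow : a^7/2^7 ≤ κ^7 := by
          rw [div_le_iff₀ (by positivity : (0:ℝ) < 2^7)]
          calc a^7 ≤ (2*κ)^7 := by gcongr
            _ = κ^7 * 2^7 := by ring
        have hrpow : (1+κ) ^ (-(5:ℝ)) = (a^5)⁻¹ := by
          rw [← ha, Real.rpow_neg ha0.le, show ((5:ℝ)) = ((5:ℕ):ℝ) by norm_num,
            Real.rpow_natCast]
        rw [hrpow]
        calc 16*π^2*m^2*a^2/κ^7 ≤ 16*π^2*m^2*a^2/(a^7/2^7) := by
              apply div_le_div_of_nonneg_left (by positivity) (by positivity) hpow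
          _ = C₂ * (a^5)⁻¹ := by
              rw [hC₂]
              field_simp
      exact le_trans step1 step2
  have hg2meas : Measurable (fun k : EuclideanSpace ℝ (Fin 3) =>
      ENNReal.ofReal (C₂ * (1+‖k‖) ^ (-(5:ℝ)))) := by
    apply Measurable.ennreal_ofReal
    apply Measurable.const_mul
    apply Continuous.measurable
    apply Continuous.rpow_const (continuous_const.add continuous_norm)
    intro x
    left
    show 1 + ‖x‖ ≠ 0
    positivity
  calc ∫⁻ k : EuclideanSpace ℝ (Fin 3), ENNReal.ofReal (‖k‖ ^ (-1 : ℝ) * ‖F k‖ ^ 2)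
      ≤ ∫⁻ k : EuclideanSpace ℝ (Fin 3),
          ((Metric.closedBall (0 : EuclideanSpace ℝ (Fin 3)) 1).indicator
            (fun k => ENNReal.ofReal (V^2 * ‖k‖⁻¹)) k
          + ENNReal.ofReal (C₂ * (1+‖k‖) ^ (-(5:ℝ)))) := lintegral_mono hpt
    _ = (∫⁻ k : EuclideanSpace ℝ (Fin 3),
          (Metric.closedBall (0 : EuclideanSpace ℝ (Fin 3)) 1).indicator
            (fun k => ENNReal.ofReal (V^2 * ‖k‖⁻¹)) k)
        + ∫⁻ k : EuclideanSpace ℝ (Fin 3), ENNReal.ofReal (C₂ * (1+‖k‖) ^ (-(5:ℝ))) :=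
        lintegral_add_right _ hg2meas
    _ < ⊤ := by
        apply ENNReal.add_lt_top.mpr
        constructor
        · rw [lintegral_indicator Metric.isClosed_closedBall.measurableSet]
          have : ∀ k : EuclideanSpace ℝ (Fin 3),
              ENNReal.ofReal (V^2 * ‖k‖⁻¹) = ENNReal.ofReal (V^2) * ENNReal.ofReal (‖k‖⁻¹) := by
            intro k
            rw [ENNReal.ofReal_mul (sq_nonneg V)]
          simp_rw [this]
          rw [lintegral_const_mul' _ _ ENNReal.ofReal_ne_top]
          exact ENNReal.mul_lt_top ENNReal.ofReal_lt_top smallball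
        · have : ∀ k : EuclideanSpace ℝ (Fin 3),
              ENNReal.ofReal (C₂ * (1+‖k‖) ^ (-(5:ℝ)))
                = ENNReal.ofReal C₂ * ENNReal.ofReal ((1+‖k‖) ^ (-(5:ℝ))) := by
            intro k
            rw [ENNReal.ofReal_mul hC₂0]
          simp_rw [this]
          rw [lintegral_const_mul' _ _ ENNReal.ofReal_ne_top]
          apply ENNReal.mul_lt_top ENNReal.ofReal_lt_top
          apply finite_integral_one_add_norm
          rw [finrank_euclideanSpace_fin]
          norm_num

lemma cosb (n : ℕ) (u : ℝ) (h : |u - (n:ℝ)*π| ≤ π/4) : 1/2 ≤ |Real.cos u| := by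
  set d : ℝ := (n:ℝ)*π - u with hd
  have habs : |d| ≤ π/4 := by rw [hd, abs_sub_comm]; exact h
  have h1 : Real.cos u = (-1)^n * Real.cos d := by
    have := Real.cos_nat_mul_pi_sub d n
    rw [hd] at *
    rw [show (n:ℝ)*π - ((n:ℝ)*π - u) = u by ring] at this
    rw [← this]
  have h2 : Real.cos (π/4) ≤ Real.cos d := by
    rw [← Real.cos_abs d]
    apply Real.cos_le_cos_of_nonneg_of_le_pi (abs_nonneg d)
      (by linarith [Real.pi_pos]) habs
  have h3 : (1:ℝ)/2 ≤ Real.cos (π/4) := by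
    rw [Real.cos_pi_div_four]
    nlinarith [Real.sq_sqrt (by norm_num : (2:ℝ) ≥ 0), Real.sqrt_nonneg 2]
  have h4 : (1:ℝ)/2 ≤ Real.cos d := le_trans h3 h2
  rw [h1, abs_mul, abs_pow, abs_neg, abs_one, one_pow, one_mul]
  calc (1:ℝ)/2 ≤ Real.cos d := h4
    _ ≤ |Real.cos d| := le_abs_self _
set_option maxHeartbeats 1000000 in
lemma part2 (R : ℝ) (hR : 0 < R) :
    ∫⁻ k : EuclideanSpace ℝ (Fin 3), ENNReal.ofReal (‖k‖ *
      ‖ft (fun x => (((Metric.closedBall (0 : EuclideanSpace ℝ (Fin 3)) R).indicator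
        (fun _ => (1:ℝ)) x : ℝ) : ℂ)) k‖ ^ 2) = ⊤ := by
  set F : EuclideanSpace ℝ (Fin 3) → ℂ := fun k =>
    ft (fun x => (((Metric.closedBall (0 : EuclideanSpace ℝ (Fin 3)) R).indicator
        (fun _ => (1:ℝ)) x : ℝ) : ℂ)) k with hF
  set B := volume (Metric.ball (0 : EuclideanSpace ℝ (Fin 3)) 1) with hB
  set a : ℕ → ℝ := fun n => ((n:ℝ)+7/4)*(π/R) with ha
  set b : ℕ → ℝ := fun n => ((n:ℝ)+9/4)*(π/R) with hb
  have hw : 0 < π/R := by positivity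
  have hapos : ∀ n, 0 < a n := fun n => by simp only [ha]; positivity
  have hbpos : ∀ n, 0 < b n := fun n => by simp only [hb]; positivity
  have hab : ∀ n, a n ≤ b n := fun n => by
    simp only [ha, hb]
    apply mul_le_mul_of_nonneg_right (by linarith) hw.le
  set S : ℕ → Set (EuclideanSpace ℝ (Fin 3)) := fun n =>
    Metric.closedBall 0 (b n) \ Metric.ball 0 (a n) with hS
  have hSmeas : ∀ n, MeasurableSet (S n) := fun n =>
    Metric.isClosed_closedBall.measurableSet.diff Metric.isOpen_ball.measurableSet
  have hSnorm : ∀ n, ∀ k ∈ S n, a n ≤ ‖k‖ ∧ ‖k‖ ≤ b n := by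
    intro n k hk
    rw [hS] at hk
    obtain ⟨hk1, hk2⟩ := hk
    rw [Metric.mem_closedBall, dist_zero_right] at hk1
    rw [Metric.mem_ball, dist_zero_right, not_lt] at hk2
    exact ⟨hk2, hk1⟩
  have hdisj : Pairwise (Function.onFun Disjoint S) := by
    have key : ∀ p q : ℕ, p < q → Disjoint (S p) (S q) := by
      intro p q hpq
      rw [Set.disjoint_left]
      intro k hkp hkq
      have h1 := (hSnorm p k hkp).2
      have h2 := (hSnorm q k hkq).1
      have : b p < a q := by
        simp only [hb, ha]
        have : (p:ℝ) + 1 ≤ (q:ℝ) := by exact_mod_cast hpq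
        have h3 : (p:ℝ)+9/4 < (q:ℝ)+7/4 := by linarith
        exact mul_lt_mul_of_pos_right h3 hw
      linarith
    intro p q hpq
    rcases hpq.lt_or_gt with h | h
    · exact key p q h
    · exact (key q p h).symm
  -- lower bound on the shells
  have hlow : ∀ n : ℕ, ∀ k ∈ S n,
      ENNReal.ofReal (π^2*R^2/(b n)^3) ≤ ENNReal.ofReal (‖k‖ * ‖F k‖^2) := by
    intro n k hk
    obtain ⟨hk1, hk2⟩ := hSnorm n k hk
    have hκpos : 0 < ‖k‖ := lt_of_lt_of_le (hapos n) hk1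
    have hk0 : k ≠ 0 := norm_pos_iff.mp hκpos
    set κ := ‖k‖ with hκ
    set u : ℝ := κ*R with hu
    have hu1 : ((n:ℝ)+2)*π - π/4 ≤ u := by
      rw [hu]
      have : a n * R ≤ κ * R := by gcongr
      simp only [ha] at this
      calc ((n:ℝ)+2)*π - π/4 = ((n:ℝ)+7/4)*(π/R)*R := by field_simp; ring
        _ ≤ κ*R := this
    have hu2 : u ≤ ((n:ℝ)+2)*π + π/4 := by
      rw [hu]
      have : κ * R ≤ b n * R := by gcongr
      simp only [hb] at this
      calc κ*R ≤ ((n:ℝ)+9/4)*(π/R)*R := this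
        _ = ((n:ℝ)+2)*π + π/4 := by field_simp; ring
    have hcos : 1/2 ≤ |Real.cos u| := by
      apply cosb (n+2)
      rw [abs_le]
      push_cast
      constructor <;> [linarith; linarith]
    have hu4 : (4:ℝ) ≤ u := by
      have hπ := Real.pi_gt_three
      have : ((n:ℝ)+2)*π - π/4 ≥ 2*π - π/4 := by
        have : (0:ℝ) ≤ (n:ℝ) := Nat.cast_nonneg n
        nlinarith
      nlinarith
    have hs : u/4 ≤ |Real.sin u - u * Real.cos u| := by
      have h1 : |u * Real.cos u| - |Real.sin u| ≤ |u * Real.cos u - Real.sin u| :=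
        abs_sub_abs_le_abs_sub _ _
      rw [abs_sub_comm] at h1
      have h2 : u/2 ≤ |u * Real.cos u| := by
        rw [abs_mul, abs_of_nonneg (by linarith : (0:ℝ) ≤ u)]
        calc u/2 = u * (1/2) := by ring
          _ ≤ u * |Real.cos u| := by gcongr
      have h3 : |Real.sin u| ≤ 1 := Real.abs_sin_le_one u
      linarith
    have hFge : π*R/κ^2 ≤ ‖F k‖ := by
      have hFval : F k = ((4 * π * (Real.sin (‖k‖*R) - ‖k‖*R*Real.cos (‖k‖*R)) / ‖k‖^3 : ℝ) : ℂ) :=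
        ft_ind R hR k hk0
      rw [hFval, Complex.norm_real, Real.norm_eq_abs, ← hκ, ← hu]
      rw [abs_div, abs_of_pos (by positivity : (0:ℝ) < κ^3)]
      rw [div_le_div_iff₀ (by positivity) (by positivity)]
      calc π*R*κ^3 = π*u*κ^2 := by rw [hu]; ring
        _ = 4*π*(u/4)*κ^2 := by ring
        _ ≤ 4*π*|Real.sin u - u*Real.cos u| *κ^2 := by
            gcongr
        _ ≤ |4*π*(Real.sin u - u*Real.cos u)| *κ^2 := by
            gcongr
            rw [abs_mul, abs_of_pos (by positivity : (0:ℝ) < 4*π)]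
    apply ENNReal.ofReal_le_ofReal
    calc π^2*R^2/(b n)^3 ≤ π^2*R^2/κ^3 := by
          apply div_le_div_of_nonneg_left (by positivity) (by positivity)
          gcongr
      _ = κ * (π*R/κ^2)^2 := by field_simp
      _ ≤ κ * ‖F k‖^2 := by
          gcongr
  -- measure of the shells
  have hμS : ∀ n, volume (S n) = ENNReal.ofReal ((b n)^3 - (a n)^3) * B := by
    intro n
    rw [hS]
    have hsub : Metric.ball (0 : EuclideanSpace ℝ (Fin 3)) (a n)
        ⊆ Metric.closedBall 0 (b n) :=
      Metric.ball_subset_closedBall.trans (Metric.closedBall_subset_closedBall (hab n))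
    rw [measure_diff hsub Metric.isOpen_ball.measurableSet.nullMeasurableSet
      measure_ball_lt_top.ne]
    rw [Measure.addHaar_closedBall _ _ (hbpos n).le, Measure.addHaar_ball _ _ (hapos n).le]
    rw [finrank_euclideanSpace_fin, ← hB]
    rw [ENNReal.ofReal_sub _ (by positivity : (0:ℝ) ≤ (a n)^3),
      ENNReal.sub_mul (fun _ _ => measure_ball_lt_top.ne)]
  -- the series diverges
  have hsum : (∑' n : ℕ, ENNReal.ofReal ((π^2*R^2/8) * (1/((n:ℝ)+3)))) = ⊤ := by
    by_contra h
    set c : ℝ := π^2*R^2/8 with hc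
    have hc0 : 0 < c := by positivity
    have h2 : Summable (fun n : ℕ => (c * (1/((n:ℝ)+3))).toNNReal) := by
      apply ENNReal.tsum_coe_ne_top_iff_summable.mp
      exact h
    have h3 : Summable (fun n : ℕ => c * (1/((n:ℝ)+3))) := by
      have := NNReal.summable_coe.mpr h2
      convert this using 2 with n
      rw [Real.coe_toNNReal _ (by positivity)]
    have h4 : Summable (fun n : ℕ => 1/((n:ℝ)+3)) := by
      have := h3.mul_left c⁻¹
      refine this.congr (fun n => ?_)
      field_simp
    have h5 : Summable (fun n : ℕ => 1/((n:ℝ))) := by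
      apply (summable_nat_add_iff 3).mp
      refine h4.congr (fun n => ?_)
      push_cast
      ring
    exact Real.not_summable_one_div_natCast h5
  -- per-shell lower bound including the measure
  have hterm : ∀ n : ℕ, ENNReal.ofReal ((π^2*R^2/8) * (1/((n:ℝ)+3))) * B
      ≤ ∫⁻ k in S n, ENNReal.ofReal (‖k‖ * ‖F k‖^2) := by
    intro n
    calc ENNReal.ofReal ((π^2*R^2/8) * (1/((n:ℝ)+3))) * B
        ≤ ENNReal.ofReal (π^2*R^2/(b n)^3 * ((b n)^3 - (a n)^3)) * B := by
          apply mul_le_mul_left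
          apply ENNReal.ofReal_le_ofReal
          -- the elementary inequality
          have key : 1/(8*((n:ℝ)+3)) ≤ ((b n)^3 - (a n)^3)/(b n)^3 := by
            rw [div_le_div_iff₀ (by positivity) (by positivity : (0:ℝ) < (b n)^3)]
            simp only [ha, hb]
            have hx : (0:ℝ) ≤ (n:ℝ) := Nat.cast_nonneg n
            have hw3 : (0:ℝ) < (π/R)^3 := by positivity
            set x : ℝ := (n:ℝ)
            set w : ℝ := π/R
            have expand : ((x+9/4)*w)^3 - ((x+7/4)*w)^3
                = ((x+9/4)^3 - (x+7/4)^3)*w^3 := by ring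
            have expand2 : ((x+9/4)*w)^3 = (x+9/4)^3*w^3 := by ring
            rw [expand, expand2]
            have hpoly : (x+9/4)^3 ≤ ((x+9/4)^3 - (x+7/4)^3) * (8*(x+3)) := by
              nlinarith [sq_nonneg x, sq_nonneg (x+1)]
            calc 1 * ((x+9/4)^3*w^3) = (x+9/4)^3*w^3 := by ring
              _ ≤ ((x+9/4)^3 - (x+7/4)^3) * (8*(x+3)) * w^3 := by
                  apply mul_le_mul_of_nonneg_right hpoly hw3.le
              _ = ((x+9/4)^3 - (x+7/4)^3)*w^3 * (8*(x+3)) := by ring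
          calc (π^2*R^2/8) * (1/((n:ℝ)+3)) = π^2*R^2 * (1/(8*((n:ℝ)+3))) := by
                have hn3 : ((n:ℝ)+3) ≠ 0 := by positivity
                field_simp
            _ ≤ π^2*R^2 * (((b n)^3 - (a n)^3)/(b n)^3) := by
                apply mul_le_mul_of_nonneg_left key (by positivity)
            _ = π^2*R^2/(b n)^3 * ((b n)^3 - (a n)^3) := by ring
      _ = ENNReal.ofReal (π^2*R^2/(b n)^3) * (ENNReal.ofReal ((b n)^3 - (a n)^3) * B) := by
          rw [← mul_assoc, ← ENNReal.ofReal_mul (by positivity)]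
      _ = ENNReal.ofReal (π^2*R^2/(b n)^3) * volume (S n) := by rw [hμS n]
      _ = ∫⁻ _ in S n, ENNReal.ofReal (π^2*R^2/(b n)^3) := (setLIntegral_const _ _).symm
      _ ≤ ∫⁻ k in S n, ENNReal.ofReal (‖k‖ * ‖F k‖^2) :=
          setLIntegral_mono' (hSmeas n) (hlow n)
  -- put everything together
  rw [eq_top_iff]
  calc (⊤ : ENNReal) = (∑' n : ℕ, ENNReal.ofReal ((π^2*R^2/8) * (1/((n:ℝ)+3)))) * B := by
        rw [hsum, ENNReal.top_mul]
        rw [hB]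
        exact (Metric.measure_ball_pos volume 0 one_pos).ne'
    _ = ∑' n : ℕ, ENNReal.ofReal ((π^2*R^2/8) * (1/((n:ℝ)+3))) * B := ENNReal.tsum_mul_right.symm
    _ ≤ ∑' n : ℕ, ∫⁻ k in S n, ENNReal.ofReal (‖k‖ * ‖F k‖^2) := ENNReal.tsum_le_tsum hterm
    _ = ∫⁻ k in ⋃ n, S n, ENNReal.ofReal (‖k‖ * ‖F k‖^2) :=
        (lintegral_iUnion hSmeas hdisj _).symm
    _ ≤ ∫⁻ k, ENNReal.ofReal (‖k‖ * ‖F k‖^2) := setLIntegral_le_lintegral _ _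

end Aux

/-- The top-hat function (indicator of the closed ball of radius `R > 0`) belongs to the
homogeneous Sobolev space `Ḣ^{-1/2}(ℝ³)` — i.e. `∫ |k|⁻¹ |f̂(k)|² dk < ∞` — but not to
`Ḣ^{1/2}(ℝ³)` — i.e. `∫ |k| |f̂(k)|² dk = ∞`. -/
theorem stmt3 (R : ℝ) (hR : 0 < R) (f : EuclideanSpace ℝ (Fin 3) → ℝ)
    (hf : f = (Metric.closedBall (0 : EuclideanSpace ℝ (Fin 3)) R).indicator fun _ => 1) :
    (∫⁻ k : EuclideanSpace ℝ (Fin 3),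
        ENNReal.ofReal (‖k‖ ^ (-1 : ℝ) * ‖ft (fun x => (f x : ℂ)) k‖ ^ 2) < ⊤) ∧
    (∫⁻ k : EuclideanSpace ℝ (Fin 3),
        ENNReal.ofReal (‖k‖ * ‖ft (fun x => (f x : ℂ)) k‖ ^ 2) = ⊤) := by
  subst hf
  exact ⟨part1 R hR, part2 R hR⟩
end

section
/- Let 0 < a < 1 and let F : ℝ → ℝ be bounded, continuous on [0,∞), and measurable. Then lim_{r→∞} r^a · ∫₀^∞ k^{a-1} F(k) · (sin(k r)/(k r)) dk = -F(0) · Γ(a-1) · cos(π a / 2). (Note Γ(a-1) < 0 for 0 < a < 1, so the limit is positive when F(0) > 0.) -/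
open MeasureTheory Real Filter

open Set

set_option maxHeartbeats 1000000

lemma measA {a : ℝ} : Measurable (fun u : ℝ => u ^ (a - 2) * |Real.sin u|) :=
  (measurable_id.pow measurable_const).mul Real.measurable_sin.abs

lemma integrableA {a : ℝ} (ha : 0 < a) (ha' : a < 1) :
    IntegrableOn (fun u : ℝ => u ^ (a - 2) * |Real.sin u|) (Ioi 0) := by
  have h01 : IntegrableOn (fun u : ℝ => u ^ (a - 2) * |Real.sin u|) (Ioc 0 1) := by
    have hint : IntegrableOn (fun u : ℝ => u ^ (a - 1)) (Ioc 0 1) := by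
      have := (intervalIntegral.intervalIntegrable_rpow' (a := 0) (b := 1)
        (r := a - 1) (by linarith))
      rw [intervalIntegrable_iff, uIoc_of_le (by norm_num : (0:ℝ) ≤ 1)] at this
      exact this
    refine hint.mono' measA.aestronglyMeasurable ?_
    filter_upwards [ae_restrict_mem measurableSet_Ioc] with u hu
    have hu0 : 0 < u := hu.1
    have h1 : |Real.sin u| ≤ u := by
      rw [abs_le]; constructor
      · nlinarith [Real.sin_nonneg_of_nonneg_of_le_pi hu0.le (le_trans hu.2 (by linarith [Real.pi_gt_three]))]
      · exact (Real.sin_le hu0.le)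
    have h2 : u ^ (a - 2) * |Real.sin u| ≤ u ^ (a - 2) * u := by
      exact mul_le_mul_of_nonneg_left h1 (Real.rpow_nonneg hu0.le _)
    rw [Real.norm_eq_abs, abs_of_nonneg (by positivity)]
    calc u ^ (a - 2) * |Real.sin u| ≤ u ^ (a - 2) * u := h2
      _ = u ^ (a - 1) := by
        rw [← Real.rpow_add_one hu0.ne']; ring_nf
  have h1i : IntegrableOn (fun u : ℝ => u ^ (a - 2) * |Real.sin u|) (Ioi 1) := by
    have hint : IntegrableOn (fun u : ℝ => u ^ (a - 2)) (Ioi 1) :=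
      integrableOn_Ioi_rpow_of_lt (by linarith) one_pos
    refine hint.mono' measA.aestronglyMeasurable ?_
    filter_upwards [ae_restrict_mem measurableSet_Ioi] with u hu
    have hu0 : (0:ℝ) < u := lt_trans one_pos hu
    rw [Real.norm_eq_abs, abs_of_nonneg (by positivity)]
    calc u ^ (a - 2) * |Real.sin u| ≤ u ^ (a - 2) * 1 :=
        mul_le_mul_of_nonneg_left (abs_sin_le_one u) (Real.rpow_nonneg hu0.le _)
      _ = u ^ (a - 2) := mul_one _
  have : Ioi (0:ℝ) = Ioc 0 1 ∪ Ioi 1 := (Ioc_union_Ioi_eq_Ioi (by norm_num)).symm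
  rw [this]
  exact h01.union h1i
lemma measJ {a : ℝ} : Measurable (fun t : ℝ => t ^ (1 - a) / (1 + t ^ 2)) :=
  (measurable_id.pow measurable_const).div ((measurable_const.add (measurable_id.pow measurable_const)))

lemma integrableJ {a : ℝ} (ha : 0 < a) (ha' : a < 1) :
    IntegrableOn (fun t : ℝ => t ^ (1 - a) / (1 + t ^ 2)) (Ioi 0) := by
  have h01 : IntegrableOn (fun t : ℝ => t ^ (1 - a) / (1 + t ^ 2)) (Ioc 0 1) := by
    refine (integrableOn_const_iff (C := (1:ℝ)) (μ := volume) (s := Ioc (0:ℝ) 1)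
      |>.mpr (Or.inr measure_Ioc_lt_top)).mono' measJ.aestronglyMeasurable ?_
    filter_upwards [ae_restrict_mem measurableSet_Ioc] with t ht
    have ht0 : 0 < t := ht.1
    have h1 : t ^ (1 - a) ≤ 1 := by
      apply Real.rpow_le_one ht0.le ht.2 (by linarith)
    have h2 : (0:ℝ) < 1 + t ^ 2 := by positivity
    rw [Real.norm_eq_abs, abs_of_nonneg (by positivity)]
    rw [div_le_iff₀ h2]
    nlinarith [Real.rpow_nonneg ht0.le (1-a)]
  have h1i : IntegrableOn (fun t : ℝ => t ^ (1 - a) / (1 + t ^ 2)) (Ioi 1) := by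
    have hint : IntegrableOn (fun t : ℝ => t ^ (-1 - a)) (Ioi 1) :=
      integrableOn_Ioi_rpow_of_lt (by linarith) one_pos
    refine hint.mono' measJ.aestronglyMeasurable ?_
    filter_upwards [ae_restrict_mem measurableSet_Ioi] with t ht
    have ht0 : (0:ℝ) < t := lt_trans one_pos ht
    have h2 : (0:ℝ) < 1 + t ^ 2 := by positivity
    rw [Real.norm_eq_abs, abs_of_nonneg (by positivity), div_le_iff₀ h2]
    have : t ^ (-1 - a) * t ^ 2 = t ^ (1 - a) := by
      rw [← Real.rpow_two, ← Real.rpow_add ht0]; ring_nf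
    nlinarith [Real.rpow_nonneg ht0.le (-1 - a), Real.rpow_nonneg ht0.le (1 - a)]
  have : Ioi (0:ℝ) = Ioc 0 1 ∪ Ioi 1 := (Ioc_union_Ioi_eq_Ioi (by norm_num)).symm
  rw [this]
  exact h01.union h1i

lemma laplace_sin {t : ℝ} (ht : 0 < t) :
    ∫ u in Ioi (0:ℝ), Real.exp (-(t * u)) * Real.sin u = 1 / (1 + t ^ 2) := by
  set G : ℝ → ℝ := fun u => -Real.exp (-(t * u)) * (t * Real.sin u + Real.cos u) / (1 + t ^ 2)
    with hG
  have h2 : (0:ℝ) < 1 + t ^ 2 := by positivity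
  have hderiv : ∀ u ∈ Ioi (0:ℝ), HasDerivAt G (Real.exp (-(t * u)) * Real.sin u) u := by
    intro u _
    have he : HasDerivAt (fun u : ℝ => Real.exp (-(t * u))) (-t * Real.exp (-(t * u))) u := by
      have := ((hasDerivAt_id u).const_mul t).neg.exp
      simpa [mul_comm] using this
    have hs : HasDerivAt (fun u : ℝ => t * Real.sin u + Real.cos u)
        (t * Real.cos u - Real.sin u) u := by
      exact (((Real.hasDerivAt_sin u).const_mul t).add (Real.hasDerivAt_cos u)).congr_deriv (by ring)
    have := (he.neg.mul hs).div_const (1 + t ^ 2)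
    refine this.congr_deriv ?_
    simp only [Pi.neg_apply]
    rw [div_eq_iff h2.ne']
    ring
  have hint : IntegrableOn (fun u : ℝ => Real.exp (-(t * u)) * Real.sin u) (Ioi 0) := by
    refine (exp_neg_integrableOn_Ioi 0 ht).mono' ?_ ?_
    · exact ((measurable_const.mul measurable_id).neg.exp.mul Real.measurable_sin).aestronglyMeasurable
    filter_upwards [] with u
    rw [Real.norm_eq_abs, abs_mul, abs_of_nonneg (Real.exp_pos _).le, neg_mul]
    exact mul_le_of_le_one_right (Real.exp_pos _).le (abs_sin_le_one u)
  have htend : Tendsto G atTop (nhds 0) := by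
    have hb : Tendsto (fun u : ℝ => Real.exp (-(t * u))) atTop (nhds 0) := by
      have h5 : Tendsto (fun u : ℝ => t * u) atTop atTop := tendsto_id.const_mul_atTop ht
      exact (Real.tendsto_exp_neg_atTop_nhds_zero.comp h5)
    have : Tendsto (fun u : ℝ => Real.exp (-(t * u)) * ((t + 1) / (1 + t ^ 2))) atTop (nhds 0) := by
      simpa using hb.mul_const ((t + 1) / (1 + t ^ 2))
    apply squeeze_zero_norm _ this
    intro u
    rw [hG]
    simp only [Real.norm_eq_abs, abs_div, abs_mul, abs_neg, abs_of_nonneg (Real.exp_pos (-(t*u))).le,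
      abs_of_nonneg h2.le]
    rw [div_le_iff₀ h2]
    have h3 : |t * Real.sin u + Real.cos u| ≤ t + 1 := by
      calc |t * Real.sin u + Real.cos u| ≤ |t * Real.sin u| + |Real.cos u| := abs_add_le _ _
        _ ≤ t + 1 := by
          rw [abs_mul, abs_of_pos ht]
          have := abs_sin_le_one u; have := abs_cos_le_one u
          nlinarith
    have := Real.exp_pos (-(t*u))
    calc Real.exp (-(t*u)) * |t * Real.sin u + Real.cos u| ≤ Real.exp (-(t*u)) * (t+1) := by
          nlinarith
      _ = Real.exp (-(t*u)) * ((t + 1) / (1 + t ^ 2)) * (1 + t ^ 2) := by field_simp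
  have hcontG : ContinuousWithinAt G (Ici 0) 0 := by
    apply Continuous.continuousWithinAt
    fun_prop
  have := integral_Ioi_of_hasDerivAt_of_tendsto hcontG hderiv hint htend
  rw [this, hG]
  simp
  field_simp
lemma gamma_tail {a u : ℝ} (ha' : a < 1) (hu : 0 < u) :
    ∫ t in Ioi (0:ℝ), t ^ (1 - a) * Real.exp (-(u * t))
      = Real.Gamma (2 - a) * u ^ (a - 2) := by
  have h2a : (0:ℝ) < 2 - a := by linarith
  have := Real.integral_rpow_mul_exp_neg_mul_Ioi h2a hu
  rw [show (2:ℝ) - a - 1 = 1 - a by ring] at this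
  rw [this, one_div, Real.inv_rpow hu.le, ← Real.rpow_neg hu.le,
    show -(2 - a) = a - 2 by ring, mul_comm]

lemma integrable_tail {a u : ℝ} (ha : a < 1) (hu : 0 < u) :
    IntegrableOn (fun t : ℝ => t ^ (1 - a) * Real.exp (-(u * t))) (Ioi 0) := by
  have := integrableOn_rpow_mul_exp_neg_mul_rpow
    (show (-1:ℝ) < 1 - a by linarith) (one_pos : (0:ℝ) < 1) hu
  refine this.congr_fun (fun x hx => ?_) measurableSet_Ioi
  dsimp only
  rw [Real.rpow_one, neg_mul]

lemma step1 {a : ℝ} (ha : 0 < a) (ha' : a < 1) :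
    Real.Gamma (2 - a) * ∫ u in Ioi (0:ℝ), u ^ (a - 2) * Real.sin u
      = ∫ t in Ioi (0:ℝ), t ^ (1 - a) / (1 + t ^ 2) := by
  set f : ℝ → ℝ → ℝ := fun u t => Real.sin u * (t ^ (1 - a) * Real.exp (-(u * t))) with hf
  have hmeasf : Measurable (Function.uncurry f) := by
    apply (Real.measurable_sin.comp measurable_fst).mul
    exact (measurable_snd.pow measurable_const).mul (((measurable_fst.mul measurable_snd)).neg.exp)
  have hIntF : Integrable (Function.uncurry f)
      ((volume.restrict (Ioi (0:ℝ))).prod (volume.restrict (Ioi (0:ℝ)))) := by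
    rw [integrable_prod_iff hmeasf.aestronglyMeasurable]
    constructor
    · filter_upwards [ae_restrict_mem measurableSet_Ioi] with u hu
      exact ((integrable_tail ha' hu).const_mul (Real.sin u))
    · apply (((integrableA ha ha').const_mul (Real.Gamma (2 - a))).congr ?_ : _)
      filter_upwards [ae_restrict_mem measurableSet_Ioi] with u hu
      have : (fun t : ℝ => ‖f u t‖) = fun t => |Real.sin u| * ‖t ^ (1 - a) * Real.exp (-(u * t))‖ := by
        funext t
        rw [hf]
        simp [norm_mul, abs_mul]
      calc Real.Gamma (2 - a) * (u ^ (a - 2) * |Real.sin u|)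
          = |Real.sin u| * (Real.Gamma (2 - a) * u ^ (a - 2)) := by ring
        _ = |Real.sin u| * ∫ t in Ioi (0:ℝ), t ^ (1 - a) * Real.exp (-(u * t)) := by
            rw [gamma_tail ha' hu]
        _ = |Real.sin u| * ∫ t in Ioi (0:ℝ), ‖t ^ (1 - a) * Real.exp (-(u * t))‖ := by
            congr 1
            refine (setIntegral_congr_fun measurableSet_Ioi (fun t ht => ?_)).symm
            rw [Real.norm_eq_abs,
              abs_of_nonneg (mul_nonneg (Real.rpow_nonneg (le_of_lt ht) _) (Real.exp_pos _).le)]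
        _ = ∫ t in Ioi (0:ℝ), ‖f u t‖ := by
            rw [this, integral_const_mul]
  calc Real.Gamma (2 - a) * ∫ u in Ioi (0:ℝ), u ^ (a - 2) * Real.sin u
      = ∫ u in Ioi (0:ℝ), Real.Gamma (2 - a) * (u ^ (a - 2) * Real.sin u) :=
        (integral_const_mul _ _).symm
    _ = ∫ u in Ioi (0:ℝ), ∫ t in Ioi (0:ℝ), f u t := by
        refine setIntegral_congr_fun measurableSet_Ioi (fun u hu => ?_)
        rw [hf]
        simp only
        rw [integral_const_mul, gamma_tail ha' hu]
        ring
    _ = ∫ t in Ioi (0:ℝ), ∫ u in Ioi (0:ℝ), f u t := integral_integral_swap hIntF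
    _ = ∫ t in Ioi (0:ℝ), t ^ (1 - a) / (1 + t ^ 2) := by
        refine setIntegral_congr_fun measurableSet_Ioi (fun t ht => ?_)
        have : ∀ u : ℝ, f u t = t ^ (1 - a) * (Real.exp (-(t * u)) * Real.sin u) := by
          intro u; rw [hf]; simp only; rw [mul_comm u t]; ring
        simp_rw [this]
        rw [integral_const_mul, laplace_sin ht, mul_one_div]
lemma exp_int {b : ℝ} (hb : 0 < b) :
    ∫ x in Ioi (0:ℝ), Real.exp (-(b * x)) = 1 / b := by
  have := Real.integral_rpow_mul_exp_neg_mul_Ioi one_pos hb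
  rw [show (1:ℝ) - 1 = 0 by ring, Real.rpow_one, Real.Gamma_one, mul_one] at this
  rw [← this]
  refine setIntegral_congr_fun measurableSet_Ioi (fun x hx => ?_)
  rw [Real.rpow_zero, one_mul]

lemma gauss_tail {a x : ℝ} (ha' : a < 1) (hx : 0 < x) :
    ∫ t in Ioi (0:ℝ), t ^ (1 - a) * Real.exp (-(x * t ^ 2))
      = x ^ ((a - 2) / 2) * (1 / 2) * Real.Gamma ((2 - a) / 2) := by
  have := integral_rpow_mul_exp_neg_mul_rpow (p := 2) (q := 1 - a) (b := x)
    two_pos (by linarith) hx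
  rw [show (1 - a + 1) / 2 = (2 - a)/2 by ring, show -(1 - a + 1) / 2 = (a - 2)/2 by ring] at this
  rw [← this]
  refine setIntegral_congr_fun measurableSet_Ioi (fun t ht => ?_)
  rw [Real.rpow_two, neg_mul]

lemma step2 {a : ℝ} (ha : 0 < a) (ha' : a < 1) :
    ∫ t in Ioi (0:ℝ), t ^ (1 - a) / (1 + t ^ 2) = π / (2 * Real.sin (π * (a / 2))) := by
  set f : ℝ → ℝ → ℝ := fun t x => t ^ (1 - a) * Real.exp (-((1 + t ^ 2) * x)) with hf
  have hmeasf : Measurable (Function.uncurry f) :=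
    ((measurable_fst.pow measurable_const)).mul
      (((measurable_const.add (measurable_fst.pow measurable_const)).mul measurable_snd).neg.exp)
  have hpos : ∀ t : ℝ, (0:ℝ) < 1 + t ^ 2 := fun t => by positivity
  have hinner : ∀ t ∈ Ioi (0:ℝ), ∫ x in Ioi (0:ℝ), f t x = t ^ (1 - a) / (1 + t ^ 2) := by
    intro t ht
    rw [hf]
    simp only
    rw [MeasureTheory.integral_const_mul, exp_int (hpos t), mul_one_div]
  have hIntF : Integrable (Function.uncurry f)
      ((volume.restrict (Ioi (0:ℝ))).prod (volume.restrict (Ioi (0:ℝ)))) := by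
    rw [integrable_prod_iff hmeasf.aestronglyMeasurable]
    constructor
    · filter_upwards [ae_restrict_mem measurableSet_Ioi] with t ht
      have h1 : IntegrableOn (fun x : ℝ => t ^ (1 - a) * Real.exp (-(1 + t ^ 2) * x)) (Ioi 0) :=
        (exp_neg_integrableOn_Ioi 0 (hpos t)).const_mul _
      exact h1.congr_fun (fun x hx => by
        simp only [Function.uncurry_apply_pair, hf, neg_mul]) measurableSet_Ioi
    · apply ((integrableJ ha ha').congr ?_ : _)
      filter_upwards [ae_restrict_mem measurableSet_Ioi] with t ht
      rw [← hinner t ht]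
      refine setIntegral_congr_fun measurableSet_Ioi (fun x hx => ?_)
      simp only [Function.uncurry_apply_pair, Real.norm_eq_abs, hf]
      rw [abs_of_nonneg (mul_nonneg (Real.rpow_nonneg (le_of_lt ht) _) (Real.exp_pos _).le)]
  have hswap : ∫ t in Ioi (0:ℝ), t ^ (1 - a) / (1 + t ^ 2)
      = ∫ x in Ioi (0:ℝ), ∫ t in Ioi (0:ℝ), f t x := by
    rw [← integral_integral_swap hIntF]
    exact (setIntegral_congr_fun measurableSet_Ioi hinner).symm
  rw [hswap]
  have houter : ∀ x ∈ Ioi (0:ℝ), ∫ t in Ioi (0:ℝ), f t x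
      = (1 / 2) * Real.Gamma ((2 - a) / 2) * (Real.exp (-x) * x ^ (a / 2 - 1)) := by
    intro x hx
    have : ∀ t : ℝ, f t x = Real.exp (-x) * (t ^ (1 - a) * Real.exp (-(x * t ^ 2))) := by
      intro t
      rw [hf]
      simp only
      rw [show Real.exp (-x) * (t ^ (1 - a) * Real.exp (-(x * t ^ 2)))
          = t ^ (1 - a) * (Real.exp (-x) * Real.exp (-(x * t ^ 2))) by ring, ← Real.exp_add]
      ring_nf
    simp_rw [this]
    rw [MeasureTheory.integral_const_mul, gauss_tail ha' hx,
      show (a - 2) / 2 = a / 2 - 1 by ring]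
    ring
  rw [setIntegral_congr_fun measurableSet_Ioi houter, MeasureTheory.integral_const_mul,
    ← Real.Gamma_eq_integral (by linarith : (0:ℝ) < a / 2)]
  have hrefl := Real.Gamma_mul_Gamma_one_sub (a / 2)
  rw [show (1:ℝ) - a / 2 = (2 - a) / 2 by ring] at hrefl
  rw [show (1:ℝ)/2 * Real.Gamma ((2 - a)/2) * Real.Gamma (a/2)
      = Real.Gamma (a/2) * Real.Gamma ((2 - a)/2) / 2 by ring, hrefl, div_div,
    mul_comm (Real.sin (π * (a/2))) 2]
lemma I_val {a : ℝ} (ha : 0 < a) (ha' : a < 1) :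
    ∫ u in Ioi (0:ℝ), u ^ (a - 2) * Real.sin u
      = -Real.Gamma (a - 1) * Real.cos (π * a / 2) := by
  have hG2 : 0 < Real.Gamma (2 - a) := Real.Gamma_pos_of_pos (by linarith)
  have hs : 0 < Real.sin (π * (a / 2)) := by
    apply Real.sin_pos_of_pos_of_lt_pi (by positivity)
    calc π * (a / 2) < π * 1 := by
          apply mul_lt_mul_of_pos_left (by linarith) Real.pi_pos
      _ = π := mul_one π
  have hc : 0 < Real.cos (π * (a / 2)) := by
    apply Real.cos_pos_of_mem_Ioo
    constructor
    · nlinarith [Real.pi_pos]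
    · nlinarith [Real.pi_pos]
  have key := Real.Gamma_mul_Gamma_one_sub (a - 1)
  rw [show (1:ℝ) - (a - 1) = 2 - a by ring] at key
  have hsin_shift : Real.sin (π * (a - 1)) = -(2 * Real.sin (π * (a/2)) * Real.cos (π * (a/2))) := by
    rw [show π * (a - 1) = 2 * (π * (a/2)) - π by ring, Real.sin_sub_pi, Real.sin_two_mul]
  rw [hsin_shift] at key
  have hne : -(2 * Real.sin (π * (a/2)) * Real.cos (π * (a/2))) ≠ 0 := by
    apply neg_ne_zero.mpr; positivity
  rw [eq_div_iff hne] at key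
  have h := step1 ha ha'
  rw [step2 ha ha'] at h
  have hI : ∫ u in Ioi (0:ℝ), u ^ (a - 2) * Real.sin u
      = π / (2 * Real.sin (π * (a / 2))) / Real.Gamma (2 - a) := by
    rw [eq_div_iff hG2.ne', mul_comm]
    exact h
  rw [hI, show π * a / 2 = π * (a/2) by ring, div_div,
    div_eq_iff (by positivity : (2 * Real.sin (π * (a/2)) * Real.Gamma (2 - a)) ≠ 0)]
  linear_combination -key

/-- Oscillatory-integral asymptotics with the sinc kernel: for `0 < a < 1` and `F` bounded,
measurable and continuous on `[0,∞)`,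
`lim_{r→∞} r^a ∫₀^∞ k^{a-1} F(k) (sin(kr)/(kr)) dk = -F(0) Γ(a-1) cos(πa/2)`. -/
theorem stmt12 (a : ℝ) (ha : 0 < a) (ha' : a < 1) (F : ℝ → ℝ)
    (hbdd : ∃ C, ∀ x, |F x| ≤ C)
    (hcont : ContinuousOn F (Set.Ici 0))
    (hmeas : Measurable F) :
    Tendsto (fun r : ℝ =>
        r ^ a * ∫ k in Set.Ioi (0 : ℝ), k ^ (a - 1) * F k * (Real.sin (k * r) / (k * r)))
      atTop
      (nhds (-(F 0) * Real.Gamma (a - 1) * Real.cos (π * a / 2))) := by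
  obtain ⟨C, hC⟩ := hbdd
  set g : ℝ → ℝ → ℝ := fun r u => u ^ (a - 2) * F (u / r) * Real.sin u with hg
  have hlim : Tendsto (fun r => ∫ u in Ioi (0:ℝ), g r u) atTop
      (nhds (∫ u in Ioi (0:ℝ), u ^ (a - 2) * F 0 * Real.sin u)) := by
    apply tendsto_integral_filter_of_dominated_convergence
      (fun u => C * (u ^ (a - 2) * |Real.sin u|))
    · filter_upwards [] with r
      exact (((measurable_id.pow measurable_const).mul
        (hmeas.comp (measurable_id.div_const r))).mul Real.measurable_sin).aestronglyMeasurable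
    · filter_upwards [] with r
      filter_upwards [ae_restrict_mem measurableSet_Ioi] with u hu
      have hu0 : (0:ℝ) < u := hu
      rw [hg]
      simp only [Real.norm_eq_abs, abs_mul]
      calc |u ^ (a - 2)| * |F (u / r)| * |Real.sin u|
          = |u ^ (a - 2)| * |Real.sin u| * |F (u / r)| := by ring
        _ ≤ |u ^ (a - 2)| * |Real.sin u| * C :=
            mul_le_mul_of_nonneg_left (hC _) (by positivity)
        _ = C * (u ^ (a - 2) * |Real.sin u|) := by
            rw [abs_of_nonneg (Real.rpow_nonneg hu0.le _)]; ring
    · exact (integrableA ha ha').const_mul C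
    · filter_upwards [ae_restrict_mem measurableSet_Ioi] with u hu
      have hu0 : (0:ℝ) < u := hu
      have h1 : Tendsto (fun r : ℝ => u / r) atTop (nhds 0) :=
        tendsto_const_nhds.div_atTop tendsto_id
      have h2 : Tendsto (fun r : ℝ => F (u / r)) atTop (nhds (F 0)) := by
        apply (hcont 0 self_mem_Ici).tendsto.comp
        apply tendsto_nhdsWithin_of_tendsto_nhds_of_eventually_within _ h1
        filter_upwards [eventually_gt_atTop 0] with r hr
        exact le_of_lt (div_pos hu0 hr)
      exact (tendsto_const_nhds.mul h2).mul tendsto_const_nhds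
  have hval : ∫ u in Ioi (0:ℝ), u ^ (a - 2) * F 0 * Real.sin u
      = -(F 0) * Real.Gamma (a - 1) * Real.cos (π * a / 2) := by
    have he : ∀ u : ℝ, u ^ (a - 2) * F 0 * Real.sin u = F 0 * (u ^ (a - 2) * Real.sin u) :=
      fun u => by ring
    simp_rw [he]
    rw [MeasureTheory.integral_const_mul, I_val ha ha']
    ring
  have hsub : ∀ᶠ r : ℝ in atTop,
      r ^ a * ∫ k in Ioi (0:ℝ), k ^ (a - 1) * F k * (Real.sin (k * r) / (k * r))
        = ∫ u in Ioi (0:ℝ), g r u := by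
    filter_upwards [eventually_gt_atTop 0] with r hr
    have hcomp := MeasureTheory.integral_comp_mul_right_Ioi (fun u => g r u) 0 hr
    rw [zero_mul] at hcomp
    have h2 : ∫ u in Ioi (0:ℝ), g r u = r * ∫ k in Ioi (0:ℝ), g r (k * r) := by
      rw [hcomp, smul_eq_mul, ← mul_assoc, mul_inv_cancel₀ hr.ne', one_mul]
    rw [h2]
    have h3 : ∀ k ∈ Ioi (0:ℝ), g r (k * r)
        = r ^ (a - 2) * (k ^ (a - 2) * F k * Real.sin (k * r)) := by
      intro k hk
      have hk0 : (0:ℝ) < k := hk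
      rw [hg]
      simp only
      rw [mul_div_cancel_right₀ _ hr.ne', Real.mul_rpow hk0.le hr.le]
      ring
    have h4 : ∀ k ∈ Ioi (0:ℝ), k ^ (a - 1) * F k * (Real.sin (k * r) / (k * r))
        = r⁻¹ * (k ^ (a - 2) * F k * Real.sin (k * r)) := by
      intro k hk
      have hk0 : (0:ℝ) < k := hk
      rw [show k ^ (a - 1) = k ^ (a - 2) * k from by
        rw [← Real.rpow_add_one hk0.ne']; ring_nf]
      field_simp
    rw [setIntegral_congr_fun measurableSet_Ioi h3, MeasureTheory.integral_const_mul,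
      setIntegral_congr_fun measurableSet_Ioi h4, MeasureTheory.integral_const_mul,
      ← mul_assoc, ← mul_assoc]
    congr 1
    rw [← Real.rpow_neg_one r, ← Real.rpow_add hr]
    nth_rewrite 2 [← Real.rpow_one r]
    rw [← Real.rpow_add hr]
    norm_num
    ring_nf
  exact Tendsto.congr' (EventuallyEq.symm hsub) (hval ▸ hlim)
end

section
/- Let F_A, F_B be 2×2 real symmetric positive-definite matrices, let F_C be a 2×2 real matrix with det F_C < 0, and suppose the 4×4 block matrix F = [[F_A, F_C],[F_Cᵀ, F_B]] is positive semidefinite. Set Δ̃ := det F_A + det F_B - 2 det F_C. Then: (i) Δ̃ > 0; (ii) Δ̃² - 4 det F > 0; and (iii) if F is moreover positive definite, then Δ̃ - √(Δ̃² - 4 det F) > 0. -/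
open Matrix

private lemma psd_diag_nonneg {M : Matrix (Fin 2) (Fin 2) ℝ} (hM : M.PosSemidef) (i : Fin 2) :
    0 ≤ M i i := by
  exact hM.diag_nonneg

private lemma psd_det_nonneg {n : Type*} [Fintype n] [DecidableEq n]
    {M : Matrix n n ℝ} (hM : M.PosSemidef) : 0 ≤ M.det := by
  exact hM.det_nonneg

/-- Finite-dimensional core of the proof that entanglement between local modes decreases
with the Hubble rate: for `2×2` real symmetric positive-definite `F_A, F_B`, a `2×2` real
`F_C` with `det F_C < 0`, such that the block matrix `F = [[F_A, F_C], [F_Cᵀ, F_B]]` is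
positive semidefinite, setting `Δ̃ = det F_A + det F_B - 2 det F_C` one has
(i) `Δ̃ > 0`, (ii) `Δ̃² - 4 det F > 0`, and (iii) if `F` is positive definite then
`Δ̃ - √(Δ̃² - 4 det F) > 0`. -/
theorem stmt14 (FA FB FC : Matrix (Fin 2) (Fin 2) ℝ)
    (hFAsymm : FA.IsSymm) (hFBsymm : FB.IsSymm)
    (hFA : FA.PosDef) (hFB : FB.PosDef)
    (hFC : FC.det < 0)
    (hF : (Matrix.fromBlocks FA FC FCᵀ FB).PosSemidef) :
    0 < FA.det + FB.det - 2 * FC.det ∧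
    0 < (FA.det + FB.det - 2 * FC.det) ^ 2 - 4 * (Matrix.fromBlocks FA FC FCᵀ FB).det ∧
    ((Matrix.fromBlocks FA FC FCᵀ FB).PosDef →
      0 < (FA.det + FB.det - 2 * FC.det) -
        Real.sqrt ((FA.det + FB.det - 2 * FC.det) ^ 2 -
          4 * (Matrix.fromBlocks FA FC FCᵀ FB).det)) := by
  have ha : 0 < FA.det := hFA.det_pos
  have hb : 0 < FB.det := hFB.det_pos
  have hΔ : 0 < FA.det + FB.det - 2 * FC.det := by nlinarith
  have hFCt : FCᵀ = FCᴴ := (Matrix.conjTranspose_eq_transpose_of_trivial FC).symm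
  have : Invertible FA := FA.invertibleOfIsUnitDet ha.ne'.isUnit
  -- Schur complement
  set S : Matrix (Fin 2) (Fin 2) ℝ := FB - FCᵀ * FA⁻¹ * FC with hSdef
  have hS : S.PosSemidef := by
    rw [hSdef, hFCt]
    exact (Matrix.PosDef.fromBlocks₁₁ FC FB hFA).mp (by rwa [hFCt] at hF)
  set X : Matrix (Fin 2) (Fin 2) ℝ := FCᵀ * FA⁻¹ * FC with hXdef
  have hX : X.PosSemidef := by
    rw [hXdef, hFCt]
    exact hFA.inv.posSemidef.conjTranspose_mul_mul_same FC
  have hdetF : (Matrix.fromBlocks FA FC FCᵀ FB).det = FA.det * S.det := by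
    rw [Matrix.det_fromBlocks₁₁, Matrix.invOf_eq_nonsing_inv]
  have hdetX : X.det * FA.det = FC.det ^ 2 := by
    have hinv : FA⁻¹.det = (FA.det)⁻¹ := by
      rw [Matrix.det_nonsing_inv, Ring.inverse_eq_inv]
    rw [hXdef, Matrix.det_mul, Matrix.det_mul, Matrix.det_transpose, hinv]
    field_simp
  have hdX : 0 < X.det := by
    have := hdetX
    nlinarith
  -- FB = S + X
  have hSX : FB = S + X := by rw [hSdef]; rw [sub_add_cancel]
  clear hSdef hXdef
  clear_value S X
  -- entrywise facts
  have hS01 : S 1 0 = S 0 1 := by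
    have h := hS.1.apply 1 0
    simp at h; exact h.symm
  have hX01 : X 1 0 = X 0 1 := by
    have h := hX.1.apply 1 0
    simp at h; exact h.symm
  have hSd : 0 ≤ S 0 0 * S 1 1 - S 0 1 * S 0 1 := by
    have := psd_det_nonneg hS
    rw [Matrix.det_fin_two, hS01] at this
    linarith
  have hXd : 0 ≤ X 0 0 * X 1 1 - X 0 1 * X 0 1 := by
    have := psd_det_nonneg hX
    rw [Matrix.det_fin_two, hX01] at this
    linarith
  have hS00 : 0 ≤ S 0 0 := psd_diag_nonneg hS 0
  have hS11 : 0 ≤ S 1 1 := psd_diag_nonneg hS 1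
  have hX00 : 0 ≤ X 0 0 := psd_diag_nonneg hX 0
  have hX11 : 0 ≤ X 1 1 := psd_diag_nonneg hX 1
  -- cross term nonneg
  have hcross : 0 ≤ S 0 0 * X 1 1 + S 1 1 * X 0 0 - 2 * (S 0 1 * X 0 1) := by
    nlinarith [sq_nonneg (S 0 0 * X 1 1 - S 1 1 * X 0 0), mul_nonneg hSd hXd,
      mul_nonneg hS00 hX11, mul_nonneg hS11 hX00, sq_nonneg (S 0 1 * X 0 1),
      sq_nonneg (S 0 0 * X 1 1 + S 1 1 * X 0 0 - 2 * (S 0 1 * X 0 1)),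
      sq_nonneg (S 0 0 * X 1 1 + S 1 1 * X 0 0 + 2 * (S 0 1 * X 0 1))]
  -- det FB = det S + det X + cross
  have hbd : FB.det = S.det + X.det +
      (S 0 0 * X 1 1 + S 1 1 * X 0 0 - 2 * (S 0 1 * X 0 1)) := by
    rw [hSX]
    rw [Matrix.det_fin_two, Matrix.det_fin_two, Matrix.det_fin_two]
    simp [Matrix.add_apply, hS01, hX01]
    ring
  have hSdet_nonneg : 0 ≤ S.det := psd_det_nonneg hS
  have hFle : (Matrix.fromBlocks FA FC FCᵀ FB).det ≤ FA.det * FB.det - FC.det ^ 2 := by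
    rw [hdetF]
    have : S.det ≤ FB.det - X.det := by linarith
    have h2 : FA.det * S.det ≤ FA.det * (FB.det - X.det) := by
      exact mul_le_mul_of_nonneg_left this ha.le
    nlinarith
  have key : 0 < (FA.det + FB.det - 2 * FC.det) ^ 2 -
      4 * (Matrix.fromBlocks FA FC FCᵀ FB).det := by
    nlinarith [sq_nonneg (FA.det - FB.det), mul_pos (neg_pos.mpr hFC) hΔ]
  refine ⟨hΔ, key, fun hPD => ?_⟩
  have hdF : 0 < (Matrix.fromBlocks FA FC FCᵀ FB).det := hPD.det_pos
  have hlt : Real.sqrt ((FA.det + FB.det - 2 * FC.det) ^ 2 -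
      4 * (Matrix.fromBlocks FA FC FCᵀ FB).det) < FA.det + FB.det - 2 * FC.det := by
    rw [Real.sqrt_lt' hΔ]
    linarith
  linarith
end
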